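/- arXiv:2301.03218 — 10 statements merged into one kernel-verified Lean document; each statement's English description precedes it below -/
import Mathlib

section
/- Let M be a nonempty bounded subset of a Hilbert space H and t(x) = sup_{z ∈ M} ‖x - z‖. If x₁ ≠ x₂ are two points of H with t(x₁) = t(x₂) = m, then t((x₁+x₂)/2) < m. Consequently the function t has at most one point of global minimum (the Chebyshev center of M is unique). -/
theorem chebyshev_aux
    {H : Type*} [NormedAddCommGroup H] [InnerProductSpace ℝ H]
    (M : Set H) (hM : M.Nonempty) (hMb : Bornology.IsBounded M)
    (t : H → ℝ) (ht : ∀ x, t x = ⨆ z : M, ‖x - (z : H)‖)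
    (x₁ x₂ : H) (m : ℝ) (hne : x₁ ≠ x₂) (h1 : t x₁ = m) (h2 : t x₂ = m) :
    t (midpoint ℝ x₁ x₂) < m := by
  haveI := hM.to_subtype
  have hb : ∀ x : H, BddAbove (Set.range fun z : M => ‖x - (z : H)‖) := by
    intro x
    obtain ⟨r, hr⟩ := hMb.subset_closedBall 0
    refine ⟨‖x‖ + r, ?_⟩
    rintro _ ⟨z, rfl⟩
    have hz : ‖(z : H)‖ ≤ r := by
      have := hr z.2
      simpa [Metric.mem_closedBall] using this
    calc ‖x - (z : H)‖ ≤ ‖x‖ + ‖(z : H)‖ := norm_sub_le _ _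
      _ ≤ ‖x‖ + r := by linarith
  have hle : ∀ (x : H), t x = m → ∀ z : M, ‖x - (z : H)‖ ≤ m := by
    intro x hx z
    calc ‖x - (z : H)‖ ≤ ⨆ z : M, ‖x - (z : H)‖ := le_ciSup (hb x) z
      _ = m := by rw [← ht x, hx]
  obtain ⟨z₀, hz₀⟩ := hM
  have hm_nonneg : 0 ≤ m := le_trans (norm_nonneg _) (hle x₁ h1 ⟨z₀, hz₀⟩)
  have hm0 : 0 < m := by
    rcases hm_nonneg.lt_or_eq with h | h
    · exact h
    · exfalso
      have e1 : ‖x₁ - z₀‖ ≤ 0 := h ▸ hle x₁ h1 ⟨z₀, hz₀⟩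
      have e2 : ‖x₂ - z₀‖ ≤ 0 := h ▸ hle x₂ h2 ⟨z₀, hz₀⟩
      have : x₁ = z₀ := by
        have := le_antisymm e1 (norm_nonneg _)
        rwa [norm_eq_zero, sub_eq_zero] at this
      have : x₂ = z₀ := by
        have := le_antisymm e2 (norm_nonneg _)
        rwa [norm_eq_zero, sub_eq_zero] at this
      exact hne (by simp_all)
  set d := ‖x₁ - x₂‖ with hd_def
  have hd : 0 < d := norm_pos_iff.mpr (sub_ne_zero.mpr hne)
  have hq : ∀ z : M, ‖midpoint ℝ x₁ x₂ - (z : H)‖ ^ 2 ≤ m ^ 2 - d ^ 2 / 4 := by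
    intro z
    have hpar := parallelogram_law_with_norm ℝ (x₁ - (z : H)) (x₂ - (z : H))
    have e1 : (x₁ - (z : H)) + (x₂ - (z : H)) = (2 : ℝ) • (midpoint ℝ x₁ x₂ - (z : H)) := by
      rw [smul_sub, two_smul, midpoint_add_self, two_smul]; abel
    have e2 : (x₁ - (z : H)) - (x₂ - (z : H)) = x₁ - x₂ := by abel
    rw [e1, e2, norm_smul] at hpar
    simp only [Real.norm_ofNat] at hpar
    have ha := hle x₁ h1 z
    have hbz := hle x₂ h2 z
    have ha0 : (0:ℝ) ≤ ‖x₁ - (z : H)‖ := norm_nonneg _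
    have hb0 : (0:ℝ) ≤ ‖x₂ - (z : H)‖ := norm_nonneg _
    nlinarith [hpar, ha, hbz, ha0, hb0, norm_nonneg (midpoint ℝ x₁ x₂ - (z : H))]
  set u := Real.sqrt (m ^ 2 - d ^ 2 / 4) with hu_def
  have harg : 0 ≤ m ^ 2 - d ^ 2 / 4 :=
    le_trans (sq_nonneg _) (hq ⟨z₀, hz₀⟩)
  have hu2 : u ^ 2 = m ^ 2 - d ^ 2 / 4 := Real.sq_sqrt harg
  have hu0 : 0 ≤ u := Real.sqrt_nonneg _
  have hub : t (midpoint ℝ x₁ x₂) ≤ u := by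
    rw [ht]
    refine ciSup_le fun z => ?_
    have := hq z
    nlinarith [norm_nonneg (midpoint ℝ x₁ x₂ - (z : H))]
  have hum : u < m := by
    nlinarith
  linarith

theorem chebyshev_center_unique_midpoint
    {H : Type*} [NormedAddCommGroup H] [InnerProductSpace ℝ H]
    (M : Set H) (hM : M.Nonempty) (hMb : Bornology.IsBounded M)
    (t : H → ℝ) (ht : ∀ x, t x = ⨆ z : M, ‖x - (z : H)‖)
    (x₁ x₂ : H) (m : ℝ) (hne : x₁ ≠ x₂) (h1 : t x₁ = m) (h2 : t x₂ = m) :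
    t (midpoint ℝ x₁ x₂) < m ∧
      ∀ y₁ y₂ : H, (∀ x, t y₁ ≤ t x) → (∀ x, t y₂ ≤ t x) → y₁ = y₂ := by
  refine ⟨chebyshev_aux M hM hMb t ht x₁ x₂ m hne h1 h2, ?_⟩
  intro y₁ y₂ hy₁ hy₂
  by_contra hne'
  have heq : t y₁ = t y₂ := le_antisymm (hy₁ y₂) (hy₂ y₁)
  have hlt := chebyshev_aux M hM hMb t ht y₁ y₂ (t y₁) hne' rfl heq.symm
  exact absurd (hy₁ (midpoint ℝ y₁ y₂)) (not_le.mpr hlt)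
end

section
/- Let M be a nonempty convex bounded closed subset of a Hilbert space H and let t(x) = sup_{z ∈ M} ‖x - z‖. Then for any y ∈ H \ M there is a point z in the boundary of M such that t(z) ≤ t(y). Moreover, if H is finite-dimensional then one can choose z with t(z) < t(y). -/
open Real RealInnerProductSpace

theorem chebyshev_radius_boundary_point
    {H : Type*} [NormedAddCommGroup H] [InnerProductSpace ℝ H] [CompleteSpace H]
    (M : Set H) (hM : M.Nonempty) (hMconv : Convex ℝ M)
    (hMb : Bornology.IsBounded M) (hMcl : IsClosed M)
    (t : H → ℝ) (ht : ∀ x, t x = ⨆ z : M, ‖x - (z : H)‖)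
    (y : H) (hy : y ∉ M) :
    (∃ z ∈ frontier M, t z ≤ t y) ∧
      (FiniteDimensional ℝ H → ∃ z ∈ frontier M, t z < t y) := by
  haveI : Nonempty M := hM.to_subtype
  obtain ⟨z, hzM, hz⟩ := exists_norm_eq_iInf_of_complete_convex hM hMcl.isComplete hMconv y
  have hinner : ∀ w ∈ M, ⟪y - z, w - z⟫ ≤ 0 :=
    (norm_eq_iInf_iff_real_inner_le_zero hMconv hzM).mp hz
  set d : ℝ := ‖y - z‖ with hd_def
  have hd : 0 < d := by
    have : y ≠ z := fun h => hy (h ▸ hzM)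
    simpa [hd_def, sub_eq_zero] using this
  have bdd : ∀ x : H, BddAbove (Set.range fun w : M => ‖x - (w : H)‖) := by
    intro x
    obtain ⟨r, hr⟩ := hMb.subset_closedBall x
    refine ⟨r, ?_⟩
    rintro _ ⟨w, rfl⟩
    have := hr w.2
    simp only [Metric.mem_closedBall, dist_eq_norm] at this
    calc ‖x - (w : H)‖ = ‖(w : H) - x‖ := (norm_sub_rev _ _)
      _ ≤ r := this
  have hty_ge : d ≤ t y := by
    rw [ht y]
    exact le_ciSup (bdd y) ⟨z, hzM⟩
  have hty_pos : 0 < t y := hd.trans_le hty_ge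
  -- key estimate
  have hkey : ∀ w ∈ M, ‖z - w‖ ≤ Real.sqrt ((t y) ^ 2 - d ^ 2) := by
    intro w hw
    have hle : ‖y - w‖ ≤ t y := by
      rw [ht y]; exact le_ciSup (bdd y) ⟨w, hw⟩
    have hexp : ‖y - w‖ ^ 2 = d ^ 2 + 2 * ⟪y - z, z - w⟫ + ‖z - w‖ ^ 2 := by
      have : y - w = (y - z) + (z - w) := by abel
      rw [this, ← @norm_add_sq_real]
    have hin : 0 ≤ ⟪y - z, z - w⟫ := by
      have h1 := hinner w hw
      have : ⟪y - z, z - w⟫ = - ⟪y - z, w - z⟫ := by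
        rw [← inner_neg_right]; congr 1; abel
      linarith [this ▸ neg_nonneg.mpr h1]
    have hsq : ‖z - w‖ ^ 2 ≤ (t y) ^ 2 - d ^ 2 := by
      have h2 : ‖y - w‖ ^ 2 ≤ (t y) ^ 2 := by
        have := pow_le_pow_left₀ (norm_nonneg _) hle 2
        simpa using this
      nlinarith
    rw [Real.le_sqrt (norm_nonneg _)]
    · exact hsq
    · exact le_trans (pow_two_nonneg _) hsq
  have htz : t z ≤ Real.sqrt ((t y) ^ 2 - d ^ 2) := by
    rw [ht z]
    exact ciSup_le fun w => hkey w w.2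
  have hlt : Real.sqrt ((t y) ^ 2 - d ^ 2) < t y := by
    rw [Real.sqrt_lt' hty_pos]
    nlinarith
  -- z is on the frontier
  have hzfr : z ∈ frontier M := by
    rw [hMcl.frontier_eq]
    refine ⟨hzM, fun hzi => ?_⟩
    obtain ⟨ε, hε, hball⟩ := Metric.mem_nhds_iff.mp (mem_interior_iff_mem_nhds.mp hzi)
    set s : ℝ := min (ε / (2 * d)) (1 / 2) with hs_def
    have hs_pos : 0 < s := lt_min (div_pos hε (by linarith)) (by norm_num)
    have hs_le : s ≤ 1 / 2 := min_le_right _ _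
    set p : H := z + s • (y - z) with hp_def
    have hpz : ‖p - z‖ = s * d := by
      rw [hp_def]
      simp [norm_smul, abs_of_pos hs_pos]
      exact Or.inl hd_def.symm
    have hpM : p ∈ M := by
      apply hball
      rw [Metric.mem_ball, dist_eq_norm, hpz]
      have h1 : s ≤ ε / (2 * d) := min_le_left _ _
      have : s * d ≤ (ε / (2 * d)) * d := by nlinarith
      have h2 : (ε / (2 * d)) * d = ε / 2 := by field_simp
      linarith
    have hdle : d ≤ ‖y - p‖ := by
      exact le_of_eq_of_le hz
        (ciInf_le (f := fun w : M => ‖y - (w : H)‖) ⟨0, by rintro _ ⟨w, rfl⟩; exact norm_nonneg _⟩ ⟨p, hpM⟩)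
    have hyp : ‖y - p‖ = (1 - s) * d := by
      have : y - p = (1 - s) • (y - z) := by
        rw [hp_def]; rw [sub_smul, one_smul]; abel
      rw [this, norm_smul, Real.norm_of_nonneg (by linarith : (0:ℝ) ≤ 1 - s)]
    rw [hyp] at hdle
    nlinarith
  refine ⟨⟨z, hzfr, le_of_lt (htz.trans_lt hlt)⟩, fun _ => ⟨z, hzfr, htz.trans_lt hlt⟩⟩
end

section
/- Every nonempty convex bounded closed subset M of a Hilbert space H has a unique Chebyshev center, and this Chebyshev center lies in M. -/
open Filter Topology

theorem chebyshev_center_exists_unique_in_set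
    {H : Type*} [NormedAddCommGroup H] [InnerProductSpace ℝ H] [CompleteSpace H]
    (M : Set H) (hM : M.Nonempty) (hMconv : Convex ℝ M)
    (hMb : Bornology.IsBounded M) (hMcl : IsClosed M)
    (t : H → ℝ) (ht : ∀ x, t x = ⨆ z : M, ‖x - (z : H)‖) :
    ∃ x₀ : H, x₀ ∈ M ∧ (∀ x, t x₀ ≤ t x) ∧
      ∀ y : H, (∀ x, t y ≤ t x) → y = x₀ := by
  haveI : Nonempty M := hM.to_subtype
  obtain ⟨C, hC⟩ := hMb.subset_closedBall 0
  have hbdd : ∀ x : H, BddAbove (Set.range fun z : M => ‖x - (z : H)‖) := by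
    intro x
    refine ⟨‖x‖ + C, ?_⟩
    rintro _ ⟨z, rfl⟩
    have hz : ‖(z : H)‖ ≤ C := by
      simpa [dist_eq_norm] using hC z.2
    calc ‖x - (z : H)‖ ≤ ‖x‖ + ‖(z : H)‖ := norm_sub_le _ _
      _ ≤ ‖x‖ + C := by linarith
  have hle : ∀ x : H, ∀ z ∈ M, ‖x - z‖ ≤ t x := by
    intro x z hz
    rw [ht]
    exact le_ciSup (hbdd x) ⟨z, hz⟩
  have hsup_le : ∀ (x : H) (c : ℝ), (∀ z ∈ M, ‖x - z‖ ≤ c) → t x ≤ c := by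
    intro x c h
    rw [ht]; exact ciSup_le fun z => h z z.2
  have hnon : ∀ x, 0 ≤ t x := by
    intro x
    obtain ⟨z, hz⟩ := hM
    exact le_trans (norm_nonneg _) (hle x z hz)
  -- key parallelogram inequality for midpoints
  have hkey : ∀ x y : H, ‖x - y‖ ^ 2 / 2 + 2 * t ((2 : ℝ)⁻¹ • (x + y)) ^ 2
      ≤ t x ^ 2 + t y ^ 2 := by
    intro x y
    set m := (2 : ℝ)⁻¹ • (x + y) with hm
    have hpz : ∀ z ∈ M, 4 * ‖m - z‖ ^ 2 + ‖x - y‖ ^ 2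
        = 2 * ‖x - z‖ ^ 2 + 2 * ‖y - z‖ ^ 2 := by
      intro z hz
      have h2 : (x - z) + (y - z) = (2 : ℝ) • (m - z) := by
        rw [hm]; module
      have hpar := parallelogram_law_with_norm ℝ (x - z) (y - z)
      have hxy : (x - z) - (y - z) = x - y := by abel
      rw [h2, hxy] at hpar
      have hns : ‖(2 : ℝ) • (m - z)‖ = 2 * ‖m - z‖ := by
        rw [norm_smul]; simp
      rw [hns] at hpar
      nlinarith [hpar]
    set D := (t x ^ 2 + t y ^ 2 - ‖x - y‖ ^ 2 / 2) / 2 with hD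
    have hm2 : ∀ z ∈ M, ‖m - z‖ ^ 2 ≤ D := by
      intro z hz
      have h1 := hpz z hz
      have h2 := hle x z hz
      have h3 := hle y z hz
      nlinarith [norm_nonneg (x - z), norm_nonneg (y - z)]
    have hD0 : 0 ≤ D := by
      obtain ⟨z, hz⟩ := hM
      exact le_trans (sq_nonneg _) (hm2 z hz)
    have htm : t m ≤ Real.sqrt D := by
      apply hsup_le
      intro z hz
      exact (Real.le_sqrt (norm_nonneg _) hD0).mpr (hm2 z hz)
    have htm2 : t m ^ 2 ≤ D := by
      have hs := Real.sq_sqrt hD0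
      nlinarith [hnon m, Real.sqrt_nonneg D]
    rw [hD] at htm2
    linarith
  -- t is 1-Lipschitz-ish
  have hlip : ∀ x y : H, t x ≤ t y + ‖x - y‖ := by
    intro x y
    apply hsup_le
    intro z hz
    calc ‖x - z‖ ≤ ‖y - z‖ + ‖x - y‖ := by
          have : x - z = (y - z) + (x - y) := by abel
          rw [this]; exact norm_add_le _ _
      _ ≤ t y + ‖x - y‖ := by linarith [hle y z hz]
  -- infimum over M
  set r := sInf (t '' M) with hr
  have hbddb : BddBelow (t '' M) := ⟨0, by rintro _ ⟨x, _, rfl⟩; exact hnon x⟩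
  have hrle : ∀ x ∈ M, r ≤ t x := fun x hx => csInf_le hbddb ⟨x, hx, rfl⟩
  have hr0 : 0 ≤ r := by
    obtain ⟨z, hz⟩ := hM
    exact le_csInf ⟨t z, z, hz, rfl⟩ (by rintro _ ⟨x, _, rfl⟩; exact hnon x)
  -- minimizing sequence
  have hseq : ∀ n : ℕ, ∃ x ∈ M, t x < r + 1 / (n + 1) := by
    intro n
    have hlt : r < r + 1 / (n + 1) := by
      have : (0 : ℝ) < 1 / (n + 1) := by positivity
      linarith
    obtain ⟨_, ⟨x, hx, rfl⟩, hxlt⟩ := exists_lt_of_csInf_lt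
      (hM.image t) hlt
    exact ⟨x, hx, hxlt⟩
  choose u huM hut using hseq
  have htu : Tendsto (fun n => t (u n)) atTop (𝓝 r) := by
    have h1 : Tendsto (fun n : ℕ => r + 1 / (n + 1)) atTop (𝓝 r) := by
      simpa using tendsto_const_nhds.add (tendsto_one_div_add_atTop_nhds_zero_nat : Tendsto (fun n : ℕ => 1 / ((n : ℝ) + 1)) atTop (𝓝 0))
    exact tendsto_of_tendsto_of_tendsto_of_le_of_le tendsto_const_nhds h1
      (fun n => hrle _ (huM n)) (fun n => (hut n).le)
  -- the key Cauchy estimate for points of M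
  have hcau_est : ∀ x ∈ M, ∀ y ∈ M, ‖x - y‖ ^ 2 / 2 ≤ t x ^ 2 + t y ^ 2 - 2 * r ^ 2 := by
    intro x hx y hy
    have hmid : (2 : ℝ)⁻¹ • (x + y) ∈ M := by
      have := hMconv hx hy (by norm_num : (0:ℝ) ≤ 1/2) (by norm_num : (0:ℝ) ≤ 1/2)
        (by norm_num)
      convert this using 1
      module
    have h1 := hkey x y
    have h2 := hrle _ hmid
    have h3 := hnon ((2 : ℝ)⁻¹ • (x + y))
    nlinarith
  have hcauchy : CauchySeq u := by
    rw [Metric.cauchySeq_iff]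
    intro ε hε
    have hsq : Tendsto (fun n => t (u n) ^ 2) atTop (𝓝 (r ^ 2)) := htu.pow 2
    have hev : ∀ᶠ n in atTop, t (u n) ^ 2 < r ^ 2 + ε ^ 2 / 8 :=
      hsq.eventually_lt_const (by nlinarith)
    obtain ⟨N, hN⟩ := hev.exists_forall_of_atTop
    refine ⟨N, fun p hp q hq => ?_⟩
    have h1 := hcau_est _ (huM p) _ (huM q)
    have h2 := hN p hp
    have h3 := hN q hq
    rw [dist_eq_norm]
    nlinarith [norm_nonneg (u p - u q), hε]
  obtain ⟨x₀, hx₀lim⟩ := cauchySeq_tendsto_of_complete hcauchy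
  have hx₀M : x₀ ∈ M := hMcl.mem_of_tendsto hx₀lim (Eventually.of_forall huM)
  have htx₀ : t x₀ = r := by
    have hge : r ≤ t x₀ := hrle _ hx₀M
    have hle' : t x₀ ≤ r := by
      have hf : Tendsto (fun n => t (u n) + ‖x₀ - u n‖) atTop (𝓝 (r + 0)) := by
        apply htu.add
        have : Tendsto (fun n => x₀ - u n) atTop (𝓝 (x₀ - x₀)) :=
          tendsto_const_nhds.sub hx₀lim
        simpa using this.norm
      rw [add_zero] at hf
      exact ge_of_tendsto hf (Eventually.of_forall fun n => hlip x₀ (u n))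
    linarith
  -- global minimality via projection onto M
  have hglobal : ∀ x : H, t x₀ ≤ t x := by
    intro x
    obtain ⟨p, hpM, hpproj⟩ := exists_norm_eq_iInf_of_complete_convex hM
      (hMcl.isComplete) hMconv x
    have hvar := (norm_eq_iInf_iff_real_inner_le_zero hMconv hpM).mp hpproj
    have hnp : ∀ z ∈ M, ‖p - z‖ ≤ ‖x - z‖ := by
      intro z hz
      have h1 : inner ℝ (x - p) (z - p) ≤ (0 : ℝ) := hvar z hz
      have hexp : ‖x - z‖ ^ 2 = ‖x - p‖ ^ 2 - 2 * inner ℝ (x - p) (z - p) + ‖p - z‖ ^ 2 := by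
        have hs : x - z = (x - p) - (z - p) := by abel
        have hpz : p - z = -(z - p) := by abel
        rw [hs, @norm_sub_sq_real, hpz, norm_neg]
      nlinarith [norm_nonneg (p - z), norm_nonneg (x - z), sq_nonneg ‖x - p‖]
    have htp : t p ≤ t x :=
      hsup_le p (t x) (fun z hz => le_trans (hnp z hz) (hle x z hz))
    calc t x₀ = r := htx₀
      _ ≤ t p := hrle _ hpM
      _ ≤ t x := htp
  refine ⟨x₀, hx₀M, hglobal, ?_⟩
  intro y hy
  have h1 : t y = t x₀ := le_antisymm (hy x₀) (hglobal y)
  have hmid : r ≤ t ((2 : ℝ)⁻¹ • (y + x₀)) := by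
    rw [← htx₀]; exact hglobal _
  have h2 := hkey y x₀
  have h3 := hnon ((2 : ℝ)⁻¹ • (y + x₀))
  have h4 : ‖y - x₀‖ ^ 2 ≤ 0 := by nlinarith [h1, htx₀]
  have h5 : ‖y - x₀‖ = 0 := by nlinarith [norm_nonneg (y - x₀)]
  have := norm_sub_eq_zero_iff.mp h5
  exact this
end

section
/- Let M₁ ⊆ M₂ be convex bounded closed subsets of a Hilbert space H, with boundaries Γ₁ = bd(M₁) and Γ₂ = bd(M₂). Then the self Chebyshev radius of Γ₁ is at most the self Chebyshev radius of Γ₂, i.e. δ(Γ₁) ≤ δ(Γ₂). -/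
set_option maxHeartbeats 1000000

open Set Set.Notation Metric InnerProductSpace

lemma aux_inter_frontier {X : Type*} [TopologicalSpace X] {s t : Set X}
    (hs : IsPreconnected s) (h1 : (s ∩ t).Nonempty) (h2 : (s \ t).Nonempty) :
    (s ∩ frontier t).Nonempty := by
  by_contra h
  rw [Set.not_nonempty_iff_eq_empty] at h
  have hdisj : Disjoint (frontier (interior t)) s := by
    refine Set.disjoint_left.2 fun x hx hxs => ?_
    have : x ∈ s ∩ frontier t := ⟨hxs, frontier_interior_subset hx⟩
    simp [h] at this
  have hclopen := isClopen_preimage_val isOpen_interior hdisj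
  haveI := Subtype.preconnectedSpace hs
  rcases isClopen_iff.1 hclopen with he | hu
  · obtain ⟨x, hxs, hxt⟩ := h1
    have hxi : x ∈ interior t := by
      have hxcl : x ∈ closure t := subset_closure hxt
      by_contra hxi
      have : x ∈ s ∩ frontier t := ⟨hxs, hxcl, hxi⟩
      simp [h] at this
    have : (⟨x, hxs⟩ : s) ∈ (s ↓∩ interior t) := hxi
    simp [he] at this
  · obtain ⟨x, hxs, hxt⟩ := h2
    have : (⟨x, hxs⟩ : s) ∈ (s ↓∩ interior t) := by rw [hu]; trivial
    exact hxt (interior_subset this)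

lemma aux_seg_frontier {H : Type*} [NormedAddCommGroup H] [NormedSpace ℝ H]
    {M : Set H} {a b : H} (ha : a ∈ M) (hb : b ∉ M) :
    ∃ z ∈ frontier M, z ∈ segment ℝ a b := by
  obtain ⟨z, hz1, hz2⟩ := aux_inter_frontier (convex_segment a b).isPreconnected
    ⟨a, left_mem_segment ℝ a b, ha⟩ ⟨b, right_mem_segment ℝ a b, hb⟩
  exact ⟨z, hz2, hz1⟩

lemma aux_boundary_sup {H : Type*} [NormedAddCommGroup H] [NormedSpace ℝ H]
    {M : Set H} (hb : Bornology.IsBounded M) {x : H} (hx : x ∈ frontier M)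
    {y : H} (hy : y ∈ M) : ∃ z ∈ frontier M, dist x y ≤ dist x z := by
  by_cases hyf : y ∈ frontier M
  · exact ⟨y, hyf, le_rfl⟩
  have hyi : y ∈ interior M := by
    have : y ∈ closure M := subset_closure hy
    by_contra h; exact hyf ⟨this, h⟩
  have hxy : x ≠ y := fun h => hx.2 (h ▸ hyi)
  have hnorm : (0:ℝ) < ‖y - x‖ := by
    rw [norm_pos_iff, sub_ne_zero]; exact fun h => hxy h.symm
  obtain ⟨R, hR⟩ := hb.subset_closedBall 0
  set T : ℝ := max 1 ((R + ‖x‖ + 1) / ‖y - x‖) with hT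
  have hT1 : (1:ℝ) ≤ T := le_max_left _ _
  set b : H := x + T • (y - x) with hbdef
  have hbM : b ∉ M := by
    intro hbm
    have hble : ‖b‖ ≤ R := by simpa using hR hbm
    have h1 : (R + ‖x‖ + 1) ≤ T * ‖y - x‖ := by
      rw [← div_le_iff₀ hnorm]  -- (R+‖x‖+1)/‖y-x‖ ≤ T
      exact le_max_right _ _
    have h2 : T * ‖y - x‖ = ‖T • (y - x)‖ := by
      rw [norm_smul, Real.norm_eq_abs, abs_of_pos (lt_of_lt_of_le one_pos hT1)]
    have h3 : ‖T • (y - x)‖ ≤ ‖b‖ + ‖x‖ := by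
      have : T • (y - x) = b - x := by rw [hbdef]; abel
      rw [this]
      exact norm_sub_le _ _
    linarith
  obtain ⟨z, hzf, hzseg⟩ := aux_seg_frontier hy hbM
  refine ⟨z, hzf, ?_⟩
  obtain ⟨s1, s2, hs1, hs2, hsum, hz⟩ := hzseg
  have hs1' : s1 = 1 - s2 := by linarith
  subst hs1'
  have hzx : z - x = ((1 - s2) + s2 * T) • (y - x) := by
    rw [← hz, hbdef]
    module
  have hco : 1 ≤ (1 - s2) + s2 * T := by nlinarith
  rw [dist_eq_norm, dist_eq_norm]
  have h1 : ‖x - z‖ = ((1 - s2) + s2 * T) * ‖y - x‖ := by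
    rw [← norm_neg, neg_sub, hzx, norm_smul, Real.norm_eq_abs,
      abs_of_pos (lt_of_lt_of_le one_pos hco)]
  have h2 : ‖x - y‖ = ‖y - x‖ := by rw [← norm_neg, neg_sub]
  rw [h1, h2]
  nlinarith

lemma aux_approx_proj {H : Type*} [NormedAddCommGroup H] [InnerProductSpace ℝ H]
    {M : Set H} (hne : M.Nonempty) (hconv : Convex ℝ M) (hb : Bornology.IsBounded M)
    (hcl : IsClosed M) {x : H} (hx : x ∉ M) {ε : ℝ} (hε : 0 < ε) :
    ∃ p ∈ frontier M, ∀ y ∈ M, dist p y ≤ dist x y + ε := by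
  set d := Metric.infDist x M with hdd
  have hdpos : 0 < d := (hcl.notMem_iff_infDist_pos hne).1 hx
  set B : ℝ := Metric.diam M + 1 with hB
  have hBpos : 0 < B := by positivity
  set t : ℝ := min 1 (ε ^ 2 / (32 * B ^ 2)) with ht
  have htpos : 0 < t := lt_min one_pos (by positivity)
  have ht1 : t ≤ 1 := min_le_left _ _
  have htB : t * B ^ 2 ≤ ε ^ 2 / 32 := by
    have h1 : t ≤ ε ^ 2 / (32 * B ^ 2) := min_le_right _ _
    rw [div_mul_eq_div_div] at h1
    calc t * B ^ 2 ≤ (ε ^ 2 / 32 / B ^ 2) * B ^ 2 := by nlinarith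
    _ = ε ^ 2 / 32 := by field_simp
  set ε' : ℝ := min (min d 1) (min (ε / 4) (t * ε ^ 2 / (32 * (2 * d + 1)))) with hε'
  have hε'pos : 0 < ε' :=
    lt_min (lt_min hdpos one_pos) (lt_min (by positivity) (by positivity))
  have hε'd : ε' ≤ d := (min_le_left _ _).trans (min_le_left _ _)
  have hε'1 : ε' ≤ 1 := (min_le_left _ _).trans (min_le_right _ _)
  have hε'ε : ε' ≤ ε / 4 := (min_le_right _ _).trans (min_le_left _ _)
  have hε'key : 32 * (2 * d + 1) * ε' ≤ t * ε ^ 2 := by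
    have h1 : ε' ≤ t * ε ^ 2 / (32 * (2 * d + 1)) := (min_le_right _ _).trans (min_le_right _ _)
    have h2 : (0:ℝ) < 32 * (2 * d + 1) := by positivity
    calc 32 * (2 * d + 1) * ε' ≤ 32 * (2 * d + 1) * (t * ε ^ 2 / (32 * (2 * d + 1))) := by
          nlinarith
      _ = t * ε ^ 2 := by field_simp
  obtain ⟨p, hpM, hpd⟩ : ∃ p ∈ M, dist x p < d + ε' := by
    have : Metric.infDist x M < d + ε' := by linarith
    exact (Metric.infDist_lt_iff hne).1 this
  have hkey : ∀ y ∈ M, dist p y ≤ dist x y + ε / 2 := by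
    intro y hy
    set u : H := x - p with hu
    set v : H := y - p with hv
    have hmem : p + t • v ∈ M := by
      have he : p + t • v = (1 - t) • p + t • y := by rw [hv]; module
      rw [he]
      exact hconv hpM hy (by linarith) htpos.le (by ring)
    have hdist : d ≤ ‖u - t • v‖ := by
      have h1 := Metric.infDist_le_dist_of_mem (x := x) hmem
      have h2 : dist x (p + t • v) = ‖u - t • v‖ := by
        rw [dist_eq_norm]; congr 1; rw [hu]; module
      rw [← hdd] at h1; rw [← h2]; exact h1
    have hsq1 : d ^ 2 ≤ ‖u - t • v‖ ^ 2 := by nlinarith [norm_nonneg (u - t • v)]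
    have hexp : ‖u - t • v‖ ^ 2 = ‖u‖ ^ 2 - 2 * (t * ⟪u, v⟫_ℝ) + t ^ 2 * ‖v‖ ^ 2 := by
      rw [norm_sub_sq_real, real_inner_smul_right, norm_smul, Real.norm_eq_abs,
        mul_pow, sq_abs]
    have hvB : ‖v‖ ≤ B := by
      have h1 : dist y p ≤ Metric.diam M := Metric.dist_le_diam_of_mem hb hy hpM
      have h2 : dist y p = ‖v‖ := by rw [dist_eq_norm, hv]
      rw [← h2]; rw [hB]; linarith
    have huB : ‖u‖ < d + ε' := by
      have : dist x p = ‖u‖ := by rw [dist_eq_norm, hu]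
      linarith [this ▸ hpd]
    have hinner : 2 * ⟪u, v⟫_ℝ ≤ ε ^ 2 / 16 := by
      have hA : ‖u‖ ^ 2 ≤ (d + ε') ^ 2 := by nlinarith [norm_nonneg u]
      have hBv : t ^ 2 * ‖v‖ ^ 2 ≤ t * (ε ^ 2 / 32) := by
        have h0 : ‖v‖ ^ 2 ≤ B ^ 2 := by nlinarith [norm_nonneg v]
        have h1 : t ^ 2 * ‖v‖ ^ 2 ≤ t ^ 2 * B ^ 2 :=
          mul_le_mul_of_nonneg_left h0 (sq_nonneg t)
        have h2 : t * (t * B ^ 2) ≤ t * (ε ^ 2 / 32) :=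
          mul_le_mul_of_nonneg_left htB htpos.le
        calc t ^ 2 * ‖v‖ ^ 2 ≤ t ^ 2 * B ^ 2 := h1
          _ = t * (t * B ^ 2) := by ring
          _ ≤ t * (ε ^ 2 / 32) := h2
      have hC : (d + ε') ^ 2 - d ^ 2 ≤ t * (ε ^ 2 / 32) := by nlinarith
      have hstep : t * (2 * ⟪u, v⟫_ℝ) ≤ t * (ε ^ 2 / 16) := by linarith
      exact le_of_mul_le_mul_left hstep htpos
    have hexp2 : ‖u - v‖ ^ 2 = ‖u‖ ^ 2 - 2 * ⟪u, v⟫_ℝ + ‖v‖ ^ 2 := norm_sub_sq_real u v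
    have hfin : ‖v‖ ≤ ‖u - v‖ + ε / 4 := by
      nlinarith [norm_nonneg v, norm_nonneg (u - v), norm_nonneg u, hε]
    have e1 : dist p y = ‖v‖ := by rw [dist_eq_norm, hv, norm_sub_rev]
    have e2 : dist x y = ‖u - v‖ := by
      rw [dist_eq_norm]; congr 1; rw [hu, hv]; abel
    rw [e1, e2]; linarith
  -- now find the frontier point near p
  set s : ℝ := ε' / (d + ε') with hs
  have hspos : 0 < s := by positivity
  have hs1 : s < 1 := by rw [hs, div_lt_one (by linarith)]; linarith
  set z : H := p + s • (x - p) with hz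
  have hxz : dist x z = (1 - s) * ‖x - p‖ := by
    have he : x - z = (1 - s) • (x - p) := by rw [hz]; module
    rw [dist_eq_norm, he, norm_smul, Real.norm_eq_abs, abs_of_pos (by linarith)]
  have hzM : z ∉ M := by
    intro hzm
    have h1 : d ≤ dist x z := Metric.infDist_le_dist_of_mem hzm
    have h2 : ‖x - p‖ < d + ε' := by
      have : dist x p = ‖x - p‖ := dist_eq_norm x p
      linarith [this ▸ hpd]
    have h3 : (1 - s) * (d + ε') = d := by rw [hs]; field_simp; ring
    nlinarith [norm_nonneg (x - p)]
  have hpz : dist p z ≤ ε' := by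
    have he : p - z = (-s) • (x - p) := by rw [hz]; module
    have h2 : ‖x - p‖ < d + ε' := by
      have : dist x p = ‖x - p‖ := dist_eq_norm x p
      linarith [this ▸ hpd]
    have h3 : s * (d + ε') = ε' := by rw [hs]; field_simp
    rw [dist_eq_norm, he, norm_smul, Real.norm_eq_abs, abs_neg, abs_of_pos hspos]
    nlinarith [norm_nonneg (x - p)]
  obtain ⟨q, hqf, hqseg⟩ := aux_seg_frontier hpM hzM
  have hpq : dist p q ≤ ε' := by
    have h1 := dist_add_dist_of_mem_segment hqseg
    have h2 := dist_nonneg (x := q) (y := z)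
    linarith
  refine ⟨q, hqf, fun y hy => ?_⟩
  calc dist q y ≤ dist q p + dist p y := dist_triangle q p y
    _ ≤ ε' + (dist x y + ε / 2) := by
        rw [dist_comm q p]; exact add_le_add hpq (hkey y hy)
    _ ≤ dist x y + ε := by linarith

theorem self_chebyshev_radius_monotone
    {H : Type*} [NormedAddCommGroup H] [InnerProductSpace ℝ H]
    (M₁ M₂ : Set H)
    (h₁ : M₁.Nonempty) (h₁conv : Convex ℝ M₁) (h₁b : Bornology.IsBounded M₁)
    (h₁cl : IsClosed M₁)
    (h₂ : M₂.Nonempty) (h₂conv : Convex ℝ M₂) (h₂b : Bornology.IsBounded M₂)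
    (h₂cl : IsClosed M₂)
    (hsub : M₁ ⊆ M₂)
    (δ : Set H → ℝ)
    (hδ : ∀ Γ : Set H, δ Γ = ⨅ x : Γ, ⨆ y : Γ, dist (x : H) (y : H)) :
    δ (frontier M₁) ≤ δ (frontier M₂) := by
  haveI : PreconnectedSpace H :=
    ⟨(convex_univ : Convex ℝ (Set.univ : Set H)).isPreconnected⟩
  by_cases hF2 : (frontier M₂).Nonempty
  · -- main case
    have hM1ne : M₁ ≠ univ := by
      intro h
      have : M₂ = univ := eq_univ_of_univ_subset (h ▸ hsub)
      rw [this, frontier_univ] at hF2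
      exact Set.not_nonempty_empty hF2
    have hF1 : (frontier M₁).Nonempty := nonempty_frontier_iff.2 ⟨h₁, hM1ne⟩
    rw [hδ, hδ]
    haveI hne2 : Nonempty (frontier M₂) := hF2.to_subtype
    haveI hne1 : Nonempty (frontier M₁) := hF1.to_subtype
    apply le_ciInf
    intro x₂
    apply le_of_forall_pos_le_add
    intro ε hε
    have hx₂M₂ : (x₂ : H) ∈ M₂ := h₂cl.frontier_subset x₂.2
    obtain ⟨x₁, hx₁f, hx₁⟩ :
        ∃ x₁ ∈ frontier M₁, ∀ y ∈ M₁, dist x₁ y ≤ dist (x₂ : H) y + ε := by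
      by_cases hm : (x₂ : H) ∈ M₁
      · refine ⟨x₂, ⟨subset_closure hm, fun h => x₂.2.2 (interior_mono hsub h)⟩,
          fun y _ => by linarith⟩
      · exact aux_approx_proj h₁ h₁conv h₁b h₁cl hm hε
    have hbdd : BddBelow (Set.range fun x : frontier M₁ => ⨆ y : frontier M₁,
        dist (x : H) (y : H)) := by
      refine ⟨0, fun r hr => ?_⟩
      obtain ⟨x, rfl⟩ := hr
      exact Real.iSup_nonneg fun y => dist_nonneg
    refine le_trans (ciInf_le hbdd ⟨x₁, hx₁f⟩) ?_
    apply ciSup_le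
    intro y₁
    have hy₁M₁ : (y₁ : H) ∈ M₁ := h₁cl.frontier_subset y₁.2
    have h1 : dist x₁ (y₁ : H) ≤ dist (x₂ : H) (y₁ : H) + ε := hx₁ y₁ hy₁M₁
    obtain ⟨z, hzf, hzge⟩ := aux_boundary_sup h₂b x₂.2 (hsub hy₁M₁)
    have h2 : dist (x₂ : H) z ≤ ⨆ y : frontier M₂, dist (x₂ : H) (y : H) := by
      obtain ⟨C, hC⟩ := h₂b.subset_closedBall (x₂ : H)
      have hbdd2 : BddAbove (Set.range fun y : frontier M₂ => dist (x₂ : H) (y : H)) := by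
        refine ⟨C, fun r hr => ?_⟩
        obtain ⟨y, rfl⟩ := hr
        have : (y : H) ∈ Metric.closedBall (x₂ : H) C := hC (h₂cl.frontier_subset y.2)
        simpa [dist_comm] using this
      exact le_ciSup hbdd2 (⟨z, hzf⟩ : frontier M₂)
    linarith
  · -- frontier M₂ empty
    have h2e : frontier M₂ = ∅ := not_nonempty_iff_eq_empty.1 hF2
    have hM2univ : M₂ = univ :=
      (frontier_eq_empty_iff.1 h2e).resolve_left (nonempty_iff_ne_empty.1 h₂)
    have hub : Bornology.IsBounded (univ : Set H) := hM2univ ▸ h₂b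
    rcases subsingleton_or_nontrivial H with hs | hn
    · have hM1univ : M₁ = univ := by
        obtain ⟨m, hm⟩ := h₁
        exact eq_univ_of_forall fun z => (Subsingleton.elim m z) ▸ hm
      rw [hδ, hδ, h2e, hM1univ, frontier_univ]
    · exact absurd hub (NormedSpace.unbounded_univ ℝ H)
end

section
/- Let Γ ⊂ ℝ² be a convex curve (the boundary of a convex compact set) containing a line segment [p,q] such that Γ is contained in the closed disk of radius d(p,q)/2 centered at the midpoint o of [p,q]. Then the self Chebyshev radius of Γ equals d(p,q)/2, and o is the unique self Chebyshev center of Γ. -/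
open Metric

theorem self_chebyshev_center_of_semicircle
    (K : Set (EuclideanSpace ℝ (Fin 2))) (hKconv : Convex ℝ K) (hKcomp : IsCompact K)
    (p q : EuclideanSpace ℝ (Fin 2)) (hpq : p ≠ q)
    (hseg : segment ℝ p q ⊆ frontier K)
    (hball : frontier K ⊆ closedBall (midpoint ℝ p q) (dist p q / 2)) :
    (⨅ x : frontier K, ⨆ y : frontier K,
        dist (x : EuclideanSpace ℝ (Fin 2)) (y : EuclideanSpace ℝ (Fin 2)))
      = dist p q / 2 ∧
    midpoint ℝ p q ∈ frontier K ∧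
    (⨆ y : frontier K, dist (midpoint ℝ p q) (y : EuclideanSpace ℝ (Fin 2)))
      = dist p q / 2 ∧
    ∀ x ∈ frontier K,
      (⨆ y : frontier K, dist x (y : EuclideanSpace ℝ (Fin 2))) = dist p q / 2 →
        x = midpoint ℝ p q := by
  set o := midpoint ℝ p q with ho
  set r := dist p q / 2 with hr
  have hp : p ∈ frontier K := hseg (left_mem_segment ℝ p q)
  have hq : q ∈ frontier K := hseg (right_mem_segment ℝ p q)
  have hom : o ∈ frontier K := hseg (midpoint_mem_segment p q)
  haveI : Nonempty (frontier K) := ⟨⟨p, hp⟩⟩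
  have hrpos : 0 < r := by
    have := dist_pos.2 hpq; rw [hr]; linarith
  have hdo : ∀ y ∈ frontier K, dist o y ≤ r := by
    intro y hy
    have := hball hy
    rw [mem_closedBall] at this
    rwa [dist_comm]
  have hop : dist o p = r := by
    rw [ho, hr, dist_midpoint_left]
    simp; ring
  have hoq : dist o q = r := by
    rw [ho, hr, dist_midpoint_right]
    simp; ring
  -- boundedness of the sup family
  have hbdd : ∀ x : frontier K, BddAbove (Set.range fun y : frontier K ↦
      dist (x : EuclideanSpace ℝ (Fin 2)) (y : EuclideanSpace ℝ (Fin 2))) := by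
    intro x
    refine ⟨2 * r, ?_⟩
    rintro _ ⟨y, rfl⟩
    calc dist (x : EuclideanSpace ℝ (Fin 2)) y ≤ dist (x : EuclideanSpace ℝ (Fin 2)) o + dist o y :=
          dist_triangle _ _ _
      _ ≤ r + r := by
          have h1 := hdo x x.2; have h2 := hdo y y.2
          rw [dist_comm] at h1; linarith
      _ = 2 * r := by ring
  -- sup at o equals r
  have hsupo : (⨆ y : frontier K, dist o (y : EuclideanSpace ℝ (Fin 2))) = r := by
    apply le_antisymm
    · exact ciSup_le fun y => hdo y y.2
    · have := le_ciSup (hbdd ⟨o, hom⟩) (⟨p, hp⟩ : frontier K)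
      simpa [hop] using this
  -- every sup is ≥ r
  have hlow : ∀ x : frontier K, r ≤ ⨆ y : frontier K,
      dist (x : EuclideanSpace ℝ (Fin 2)) (y : EuclideanSpace ℝ (Fin 2)) := by
    intro x
    have h1 : dist (x : EuclideanSpace ℝ (Fin 2)) p ≤ _ := le_ciSup (hbdd x) ⟨p, hp⟩
    have h2 : dist (x : EuclideanSpace ℝ (Fin 2)) q ≤ _ := le_ciSup (hbdd x) ⟨q, hq⟩
    have h3 : dist p q ≤ dist (x : EuclideanSpace ℝ (Fin 2)) p +
        dist (x : EuclideanSpace ℝ (Fin 2)) q := by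
      rw [dist_comm (x : EuclideanSpace ℝ (Fin 2)) p]; exact dist_triangle _ _ _
    rw [hr]; linarith
  have hinf : (⨅ x : frontier K, ⨆ y : frontier K,
      dist (x : EuclideanSpace ℝ (Fin 2)) (y : EuclideanSpace ℝ (Fin 2))) = r := by
    apply le_antisymm
    · have hbb : BddBelow (Set.range fun x : frontier K => ⨆ y : frontier K,
          dist (x : EuclideanSpace ℝ (Fin 2)) (y : EuclideanSpace ℝ (Fin 2))) := by
        refine ⟨0, ?_⟩
        rintro _ ⟨x, rfl⟩
        exact le_trans (le_of_lt hrpos) (hlow x)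
      have := ciInf_le hbb (⟨o, hom⟩ : frontier K)
      simpa [hsupo] using this
    · exact le_ciInf hlow
  refine ⟨hinf, hom, hsupo, ?_⟩
  intro x hx hsup
  have hxp : dist x p ≤ r := by
    have := le_ciSup (hbdd ⟨x, hx⟩) (⟨p, hp⟩ : frontier K)
    rw [hsup] at this; exact this
  have hxq : dist x q ≤ r := by
    have := le_ciSup (hbdd ⟨x, hx⟩) (⟨q, hq⟩ : frontier K)
    rw [hsup] at this; exact this
  have htri : dist p q ≤ dist p x + dist x q := dist_triangle _ _ _
  have h2r : dist p q = 2 * r := by rw [hr]; ring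
  have hpx : dist p x = r := by
    have hc : dist p x = dist x p := dist_comm p x
    linarith
  have hxq' : dist x q = r := by linarith
  have heq : dist p x + dist x q = dist p q := by linarith
  have hw : Wbtw ℝ p x q := dist_add_dist_eq_iff.mp heq
  rw [← mem_segment_iff_wbtw] at hw
  obtain ⟨a, b, ha, hb, hab, hx'⟩ := hw
  have hxp' : x - p = b • (q - p) := by
    rw [← hx']
    have : a = 1 - b := by linarith
    rw [this]
    module
  have hnorm : dist p x = b * dist p q := by
    rw [dist_eq_norm', hxp', norm_smul, Real.norm_eq_abs, abs_of_nonneg hb,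
      ← dist_eq_norm']
  have hb2 : b = 1 / 2 := by
    rw [hpx, h2r] at hnorm
    have : r = b * (2 * r) := hnorm
    nlinarith
  have ha2 : a = 1 / 2 := by linarith
  rw [← hx', ha2, hb2, ho, midpoint_eq_smul_add]
  norm_num
end

section
/- Let P be a convex n-gon in ℝ² with boundary Γ, suppose some vertex A of P is a local minimum point of the function μ(x) = max_{y ∈ Γ} d(x,y) restricted to Γ, and suppose μ(A) equals the maximum of the distances from A to its two adjacent vertices. Then the perimeter L(Γ) satisfies L(Γ) ≥ (2+√2)·δ(Γ), where δ(Γ) is the self Chebyshev radius of Γ. -/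
open Real

local notation "E2" => EuclideanSpace ℝ (Fin 2)

private lemma seg_cpt (x y : E2) : IsCompact (segment ℝ x y) := by
  rw [segment_eq_image']
  exact isCompact_Icc.image (by continuity)

private lemma A_add_mul {n : ℕ} (A : ℕ → E2) (hper : ∀ i, A (i + n) = A i) (a k : ℕ) :
    A (a + n * k) = A a := by
  induction k with
  | zero => simp
  | succ k ih => rw [Nat.mul_succ, ← Nat.add_assoc, hper, ih]

private lemma A_congr {n : ℕ} (A : ℕ → E2) (hper : ∀ i, A (i + n) = A i) {a b : ℕ}
    (h : a % n = b % n) : A a = A b := by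
  have ha := A_add_mul A hper (a % n) (a / n)
  have hb := A_add_mul A hper (b % n) (b / n)
  rw [Nat.mod_add_div] at ha hb
  rw [ha, hb, h]

private lemma chain (A : ℕ → E2) : ∀ {a b : ℕ}, a ≤ b →
    dist (A a) (A b) ≤ ∑ i ∈ Finset.Ico a b, dist (A i) (A (i + 1)) := by
  intro a b hab
  induction b, hab using Nat.le_induction with
  | base => rw [Finset.Ico_self, Finset.sum_empty, dist_self]
  | succ b hab ih =>
      rw [Finset.sum_Ico_succ_top hab]
      calc dist (A a) (A (b + 1)) ≤ dist (A a) (A b) + dist (A b) (A (b + 1)) := dist_triangle _ _ _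
        _ ≤ _ := by linarith

private lemma sum_shift {n : ℕ} (f : ℕ → ℝ) (hf : ∀ i, f (i + n) = f i) (j : ℕ) :
    ∑ i ∈ Finset.Ico j (j + n), f i = ∑ i ∈ Finset.range n, f i := by
  induction j with
  | zero => rw [Finset.range_eq_Ico, Nat.zero_add]
  | succ j ih =>
      rcases Nat.eq_zero_or_pos n with h0 | h0
      · simp [h0]
      have h1 : ∑ i ∈ Finset.Ico j (j + n + 1), f i
          = ∑ i ∈ Finset.Ico j (j + n), f i + f (j + n) :=
        Finset.sum_Ico_succ_top (by omega) f
      have h2 : ∑ i ∈ Finset.Ico j (j + n + 1), f i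
          = f j + ∑ i ∈ Finset.Ico (j + 1) (j + n + 1), f i :=
        Finset.sum_eq_sum_Ico_succ_bot (by omega) f
      have h3 : j + 1 + n = j + n + 1 := by omega
      rw [h3, ← ih]
      have := hf j
      linarith [h1, h2]

private lemma tri_bound {n : ℕ} (hn : 3 ≤ n) (A : ℕ → E2) (hper : ∀ i, A (i + n) = A i)
    (Γ : Set E2) (hΓ : Γ = ⋃ i : Fin n, segment ℝ (A i) (A ((i : ℕ) + 1)))
    (L : ℝ) (hL : L = ∑ i : Fin n, dist (A i) (A ((i : ℕ) + 1)))
    (p : ℕ) {y : E2} (hy : y ∈ Γ) :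
    dist (A p) (A (p + 1)) + dist (A (p + 1)) y + dist y (A p) ≤ L := by
  set f : ℕ → ℝ := fun i => dist (A i) (A (i + 1)) with hf
  have hfper : ∀ i, f (i + n) = f i := by
    intro i
    simp only [hf]
    rw [show i + n + 1 = (i + 1) + n by omega, hper, hper]
  have hLI : L = ∑ i ∈ Finset.Ico p (p + n), f i := by
    rw [hL, Fin.sum_univ_eq_sum_range (fun i => dist (A i) (A (i + 1))) n,
      sum_shift f hfper p]
  -- find edge containing y
  rw [hΓ] at hy
  obtain ⟨k, hk⟩ := Set.mem_iUnion.1 hy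
  -- the index m in [p+1, p+n] congruent to k
  obtain ⟨t, ht⟩ : ∃ t, t = n * ((p + n - (k : ℕ)) / n) := ⟨_, rfl⟩
  set m := (k : ℕ) + t with hm
  have hkn : (k : ℕ) < n := k.isLt
  have hdm : n * ((p + n - (k : ℕ)) / n) + (p + n - (k : ℕ)) % n = p + n - (k : ℕ) :=
    Nat.div_add_mod _ _
  have hmod : (p + n - (k : ℕ)) % n < n := Nat.mod_lt _ (by omega)
  rw [← ht] at hdm
  have hm1 : p + 1 ≤ m := by omega
  have hm2 : m ≤ p + n := by omega
  have hAm : A m = A k := by rw [hm, ht]; exact A_add_mul A hper _ _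
  have hAm1 : A (m + 1) = A ((k : ℕ) + 1) := by
    rw [hm, ht, show (k:ℕ) + n * ((p + n - (k : ℕ)) / n) + 1 = ((k:ℕ)+1) + n * ((p + n - (k : ℕ)) / n) by omega]
    exact A_add_mul A hper _ _
  have hyseg : y ∈ segment ℝ (A m) (A (m + 1)) := by rw [hAm, hAm1]; exact hk
  have hsegdist : dist (A m) y + dist y (A (m + 1)) = f m :=
    dist_add_dist_of_mem_segment hyseg
  rcases eq_or_lt_of_le hm2 with hc | hc
  · -- m = p + n : y is on edge [A p, A (p+1)]
    have hApn : A (p + n) = A p := hper p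
    have hApn1 : A (p + n + 1) = A (p + 1) := by
      rw [show p + n + 1 = (p + 1) + n by omega]; exact hper _
    rw [hc] at hsegdist hyseg
    rw [hApn, hApn1] at hyseg
    have hseg' : dist (A p) y + dist y (A (p + 1)) = f p :=
      dist_add_dist_of_mem_segment hyseg
    have hchain : dist (A (p + 1)) (A (p + n)) ≤ ∑ i ∈ Finset.Ico (p + 1) (p + n), f i :=
      chain A (by omega)
    have hsplit : ∑ i ∈ Finset.Ico p (p + n), f i
        = f p + ∑ i ∈ Finset.Ico (p + 1) (p + n), f i :=
      Finset.sum_eq_sum_Ico_succ_bot (by omega) f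
    have e1 : dist (A p) (A (p + 1)) ≤ ∑ i ∈ Finset.Ico (p + 1) (p + n), f i := by
      calc dist (A p) (A (p + 1)) = dist (A (p + 1)) (A (p + n)) := by rw [hApn, dist_comm]
        _ ≤ _ := hchain
    have e2 : dist (A (p + 1)) y + dist y (A p) = f p := by
      rw [dist_comm (A (p+1)) y, dist_comm y (A p)]
      linarith
    rw [hLI, hsplit]
    linarith
  · -- p + 1 ≤ m < p + n
    have hsplit1 : ∑ i ∈ Finset.Ico p (p + n), f i
        = f p + ∑ i ∈ Finset.Ico (p + 1) (p + n), f i :=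
      Finset.sum_eq_sum_Ico_succ_bot (by omega) f
    have hsplit2 : ∑ i ∈ Finset.Ico (p + 1) m, f i + ∑ i ∈ Finset.Ico m (p + n), f i
        = ∑ i ∈ Finset.Ico (p + 1) (p + n), f i :=
      Finset.sum_Ico_consecutive f (by omega) (by omega)
    have hsplit3 : ∑ i ∈ Finset.Ico m (p + n), f i
        = f m + ∑ i ∈ Finset.Ico (m + 1) (p + n), f i :=
      Finset.sum_eq_sum_Ico_succ_bot (by omega) f
    have b1 : dist (A (p + 1)) y ≤ ∑ i ∈ Finset.Ico (p + 1) m, f i + dist (A m) y :=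
      calc dist (A (p + 1)) y ≤ dist (A (p + 1)) (A m) + dist (A m) y := dist_triangle _ _ _
        _ ≤ _ := by linarith [chain A (show p + 1 ≤ m by omega)]
    have b2 : dist y (A p) ≤ dist y (A (m + 1)) + ∑ i ∈ Finset.Ico (m + 1) (p + n), f i := by
      have : dist y (A p) ≤ dist y (A (m + 1)) + dist (A (m + 1)) (A (p + n)) := by
        rw [← hper p]; exact dist_triangle _ _ _
      linarith [chain A (show m + 1 ≤ p + n by omega)]
    rw [hLI, hsplit1, ← hsplit2, hsplit3]
    linarith

set_option maxHeartbeats 1000000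

private lemma exists_far_point (Γ : Set E2) (hcomp : IsCompact Γ) (hne : Γ.Nonempty)
    (μ : E2 → ℝ) (hμ : ∀ x, μ x = ⨆ y : Γ, dist x (y : E2))
    (a C : E2) (haΓ : a ∈ Γ) (hseg : segment ℝ a C ⊆ Γ)
    (hloc : IsLocalMinOn μ Γ a)
    (r : ℝ) (hr : r = μ a) (hrC : dist a C = r) (hrpos : 0 < r) :
    ∃ y ∈ Γ, dist a y = r ∧ inner ℝ (C - a) (y - a) ≤ (0 : ℝ) := by
  by_contra hcon
  push_neg at hcon
  haveI : Nonempty Γ := hne.to_subtype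
  have bdd : ∀ x : E2, BddAbove (Set.range fun y : Γ => dist x (y : E2)) := by
    intro x
    rw [← Set.image_eq_range]
    exact ((hcomp.image (Continuous.dist continuous_const continuous_id)).bddAbove)
  have hle : ∀ y ∈ Γ, dist a y ≤ r := by
    intro y hy
    rw [hr, hμ a]
    exact le_ciSup (bdd a) ⟨y, hy⟩
  have hlt : ∀ y ∈ Γ, inner ℝ (C - a) (y - a) ≤ (0:ℝ) → dist a y < r := by
    intro y hy h0
    rcases lt_or_eq_of_le (hle y hy) with h | h
    · exact h
    · exact absurd (hcon y hy h) (not_lt.2 h0)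
  -- inner product is continuous
  have hinnercont : Continuous fun y : E2 => (inner ℝ (C - a) (y - a) : ℝ) :=
    (continuous_const.inner (continuous_id.sub continuous_const))
  -- ρ : uniform bound on the "obtuse" set S
  have hρ : ∃ ρ, 0 ≤ ρ ∧ ρ < r ∧ ∀ y ∈ Γ, inner ℝ (C - a) (y - a) ≤ (0:ℝ) → dist a y ≤ ρ := by
    set S := {y ∈ Γ | inner ℝ (C - a) (y - a) ≤ (0:ℝ)} with hS
    have hScomp : IsCompact S :=
      hcomp.inter_right (isClosed_le hinnercont continuous_const)
    rcases Set.eq_empty_or_nonempty S with hSe | hSne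
    · exact ⟨0, le_refl _, hrpos, fun y hy h0 => absurd (show y ∈ S from ⟨hy, h0⟩) (by rw [hSe]; exact Set.notMem_empty y)⟩
    · obtain ⟨y₀, hy₀S, hy₀max⟩ := hScomp.exists_isMaxOn hSne
        ((Continuous.dist continuous_const continuous_id).continuousOn)
      refine ⟨dist a y₀, dist_nonneg, hlt y₀ hy₀S.1 hy₀S.2, ?_⟩
      intro y hy h0
      exact hy₀max (show y ∈ S from ⟨hy, h0⟩)
  obtain ⟨ρ, hρ0, hρr, hρbound⟩ := hρ
  set ρ' := (ρ + r) / 2 with hρ'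
  have hρ'0 : 0 < ρ' := by positivity
  have hρ'r : ρ' < r := by rw [hρ']; linarith
  have hρρ' : ρ < ρ' := by rw [hρ']; linarith
  -- ε : uniform positive lower bound on inner product on the far set T
  have hε : ∃ ε > 0, ∀ y ∈ Γ, ρ' ≤ dist a y → ε ≤ (inner ℝ (C - a) (y - a) : ℝ) := by
    set T := {y ∈ Γ | ρ' ≤ dist a y} with hT
    have hTcomp : IsCompact T :=
      hcomp.inter_right (isClosed_le continuous_const (Continuous.dist continuous_const continuous_id))
    rcases Set.eq_empty_or_nonempty T with hTe | hTne
    · exact ⟨1, one_pos, fun y hy h0 => absurd (show y ∈ T from ⟨hy, h0⟩) (by rw [hTe]; exact Set.notMem_empty y)⟩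
    · obtain ⟨y₁, hy₁T, hy₁min⟩ := hTcomp.exists_isMinOn hTne hinnercont.continuousOn
      refine ⟨(inner ℝ (C - a) (y₁ - a) : ℝ), ?_, fun y hy h0 => hy₁min (show y ∈ T from ⟨hy, h0⟩)⟩
      by_contra hneg
      push_neg at hneg
      have := hρbound y₁ hy₁T.1 hneg
      linarith [hy₁T.2]
  obtain ⟨ε, hεpos, hεbound⟩ := hε
  -- expansion of the squared distance
  have hnormCa : ‖C - a‖ = r := by rw [← hrC, dist_eq_norm, norm_sub_rev]
  have expand : ∀ (t : ℝ) (y : E2), dist (a + t • (C - a)) y ^ 2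
      = dist a y ^ 2 - 2 * t * inner ℝ (C - a) (y - a) + t ^ 2 * r ^ 2 := by
    intro t y
    rw [dist_eq_norm, dist_eq_norm]
    have h1 : a + t • (C - a) - y = (a - y) + t • (C - a) := by abel
    rw [h1, norm_add_sq_real, real_inner_smul_right]
    have h2 : (inner ℝ (a - y) (C - a) : ℝ) = - inner ℝ (C - a) (y - a) := by
      rw [real_inner_comm, show a - y = -(y - a) by abel, inner_neg_right]
    rw [h2, norm_smul, Real.norm_eq_abs, mul_pow, sq_abs, hnormCa]
    ring
  -- choose t₀
  set t₀ := min 1 (min (ε / (2 * r ^ 2)) ((r ^ 2 - ρ' ^ 2) / (6 * r ^ 2))) with ht₀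
  have hr2 : 0 < r ^ 2 := by positivity
  have hρ'2 : ρ' ^ 2 < r ^ 2 := by nlinarith
  have ht₀pos : 0 < t₀ := by
    refine lt_min one_pos (lt_min (by positivity) ?_)
    exact div_pos (by linarith) (by positivity)
  -- the key estimate
  have key : ∀ t, 0 < t → t ≤ t₀ → μ (a + t • (C - a)) < r := by
    intro t ht0 htt0
    have ht1 : t ≤ 1 := htt0.trans (min_le_left _ _)
    have htε : t ≤ ε / (2 * r ^ 2) := htt0.trans ((min_le_right _ _).trans (min_le_left _ _))
    have htρ : t ≤ (r ^ 2 - ρ' ^ 2) / (6 * r ^ 2) :=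
      htt0.trans ((min_le_right _ _).trans (min_le_right _ _))
    set b := max (r ^ 2 - t * ε) (ρ' ^ 2 + 3 * t * r ^ 2) with hb
    have hbb : ∀ y ∈ Γ, dist (a + t • (C - a)) y ^ 2 ≤ b := by
      intro y hy
      rw [expand t y]
      rcases le_or_gt ρ' (dist a y) with hcase | hcase
      · have h1 := hεbound y hy hcase
        have h2 := hle y hy
        have h3 : 0 ≤ dist a y := dist_nonneg
        refine le_max_of_le_left ?_
        have h4 : t * (2 * r ^ 2) ≤ ε := (le_div_iff₀ (by positivity)).1 htε
        have e0 : dist a y ^ 2 ≤ r ^ 2 := by nlinarith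
        have e1 : t ^ 2 * r ^ 2 ≤ t * ε / 2 := by nlinarith [mul_le_mul_of_nonneg_left (show t * r ^ 2 ≤ ε / 2 by linarith) ht0.le]
        have e2 := mul_le_mul_of_nonneg_left h1 (show (0:ℝ) ≤ 2 * t by linarith)
        have e3 : 0 ≤ t * ε := by positivity
        nlinarith [e1, e2]
      · have hinner_lb : -(r * dist a y) ≤ (inner ℝ (C - a) (y - a) : ℝ) := by
          have habs := abs_real_inner_le_norm (C - a) (y - a)
          have hny : ‖y - a‖ = dist a y := by rw [dist_eq_norm, norm_sub_rev]
          rw [hnormCa, hny] at habs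
          have := neg_abs_le (inner ℝ (C - a) (y - a) : ℝ)
          linarith
        have h2 := hle y hy
        have h3 : 0 ≤ dist a y := dist_nonneg
        refine le_max_of_le_right ?_
        have e1 : dist a y ^ 2 ≤ ρ' ^ 2 := by nlinarith
        have e2 := mul_le_mul_of_nonneg_left hinner_lb (show (0:ℝ) ≤ 2 * t by linarith)
        have e3 : r * dist a y ≤ r ^ 2 := by nlinarith
        have e5 := mul_le_mul_of_nonneg_left e3 (show (0:ℝ) ≤ 2 * t by linarith)
        have e4' := mul_le_mul_of_nonneg_right (mul_le_mul_of_nonneg_left ht1 ht0.le) hr2.le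
        have e4 : t ^ 2 * r ^ 2 ≤ t * r ^ 2 := by nlinarith [e4']
        nlinarith [e2, e5]
    have hblt : b < r ^ 2 := by
      apply max_lt
      · have := mul_pos ht0 hεpos
        linarith
      · have h6 : t * (6 * r ^ 2) ≤ r ^ 2 - ρ' ^ 2 := (le_div_iff₀ (by positivity)).1 htρ
        linarith
    have hb0 : 0 ≤ b := le_trans (sq_nonneg _) (hbb a haΓ)
    rw [hμ]
    have hub : ∀ y : Γ, dist (a + t • (C - a)) (y : E2) ≤ Real.sqrt b := by
      intro y
      exact Real.le_sqrt_of_sq_le (hbb y y.2)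
    have hsq : Real.sqrt b < r := by
      have h := Real.sqrt_lt_sqrt hb0 hblt
      rwa [Real.sqrt_sq hrpos.le] at h
    exact lt_of_le_of_lt (ciSup_le hub) hsq
  -- contradiction with the local minimum
  set φ : ℝ → E2 := fun t => a + t • (C - a) with hφ
  have hmemseg : ∀ t ∈ Set.Icc (0:ℝ) 1, φ t ∈ Γ := by
    intro t ht
    apply hseg
    rw [segment_eq_image']
    exact ⟨t, ht, rfl⟩
  have hIoc : Set.Ioc (0:ℝ) t₀ ∈ nhdsWithin (0:ℝ) (Set.Ioi 0) :=
    Ioc_mem_nhdsGT_of_mem ⟨le_refl 0, ht₀pos⟩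
  have htendsto : Filter.Tendsto φ (nhdsWithin (0:ℝ) (Set.Ioi 0)) (nhdsWithin a Γ) := by
    rw [tendsto_nhdsWithin_iff]
    constructor
    · have hc : Continuous φ := continuous_const.add (continuous_id.smul continuous_const)
      have h0 : Filter.Tendsto φ (nhds 0) (nhds (φ 0)) := hc.tendsto 0
      have hφ0 : φ 0 = a := by rw [hφ]; simp only [zero_smul, add_zero]
      rw [hφ0] at h0
      exact h0.mono_left nhdsWithin_le_nhds
    · filter_upwards [hIoc] with t ht
      exact hmemseg t ⟨ht.1.le, ht.2.trans (min_le_left _ _)⟩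
  have h1 : ∀ᶠ x in nhdsWithin a Γ, μ a ≤ μ x := hloc
  have h2 := htendsto.eventually h1
  have h3 : ∀ᶠ t in nhdsWithin (0:ℝ) (Set.Ioi 0), μ (φ t) < r := by
    filter_upwards [hIoc] with t ht
    exact key t ht.1 ht.2
  obtain ⟨t, hta, htb⟩ := (h2.and h3).exists
  rw [← hr] at hta
  exact absurd (lt_of_le_of_lt hta htb) (lt_irrefl r)

open Real

theorem perimeter_bound_of_vertex_local_min
    {n : ℕ} (hn : 3 ≤ n) (A : ℕ → EuclideanSpace ℝ (Fin 2))
    (hper : ∀ i, A (i + n) = A i)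
    (Γ : Set (EuclideanSpace ℝ (Fin 2)))
    (hΓ : Γ = ⋃ i : Fin n, segment ℝ (A i) (A ((i : ℕ) + 1)))
    (hbd : Γ = frontier (convexHull ℝ (Set.range A)))
    (μ : EuclideanSpace ℝ (Fin 2) → ℝ)
    (hμ : ∀ x, μ x = ⨆ y : Γ, dist x (y : EuclideanSpace ℝ (Fin 2)))
    (δ L : ℝ)
    (hδ : δ = ⨅ x : Γ, μ (x : EuclideanSpace ℝ (Fin 2)))
    (hL : L = ∑ i : Fin n, dist (A i) (A ((i : ℕ) + 1)))
    (j : ℕ) (hloc : IsLocalMinOn μ Γ (A j))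
    (hval : μ (A j) = max (dist (A j) (A (j + n - 1))) (dist (A j) (A (j + 1)))) :
    (2 + Real.sqrt 2) * δ ≤ L := by
  have hnpos : 0 < n := by omega
  have hΓne : Γ.Nonempty := by
    rw [hΓ]
    exact ⟨A 0, Set.mem_iUnion.2 ⟨⟨0, by omega⟩, left_mem_segment ℝ _ _⟩⟩
  haveI : Nonempty Γ := hΓne.to_subtype
  have hcomp : IsCompact Γ := by
    rw [hΓ]; exact isCompact_iUnion fun i => seg_cpt _ _
  have hAmem : ∀ i, A i ∈ Γ := by
    intro i
    rw [hΓ]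
    refine Set.mem_iUnion.2 ⟨⟨i % n, Nat.mod_lt _ hnpos⟩, ?_⟩
    have h1 : A (i % n) = A i := A_congr A hper (Nat.mod_mod_of_dvd i dvd_rfl)
    show A i ∈ segment ℝ (A (i % n)) (A (i % n + 1))
    rw [h1]
    exact left_mem_segment ℝ _ _
  have bdd : ∀ x, BddAbove (Set.range fun y : Γ => dist x (y : EuclideanSpace ℝ (Fin 2))) := by
    intro x
    rw [← Set.image_eq_range]
    exact ((hcomp.image (Continuous.dist continuous_const continuous_id)).bddAbove)
  have hμ0 : ∀ x ∈ Γ, 0 ≤ μ x := by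
    intro x hx
    rw [hμ]
    calc (0:ℝ) = dist x x := (dist_self x).symm
      _ ≤ _ := le_ciSup (bdd x) ⟨x, hx⟩
  have hδ0 : 0 ≤ δ := by
    rw [hδ]; exact le_ciInf fun x => hμ0 x x.2
  have hδle : δ ≤ μ (A j) := by
    rw [hδ]
    have hbdd : BddBelow (Set.range fun x : Γ => μ (x : EuclideanSpace ℝ (Fin 2))) := by
      refine ⟨0, ?_⟩
      rintro z ⟨x, rfl⟩
      exact hμ0 x x.2
    exact ciInf_le hbdd ⟨A j, hAmem j⟩
  have hLpos : 0 ≤ L := by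
    rw [hL]; exact Finset.sum_nonneg fun i _ => dist_nonneg
  rcases le_or_gt (μ (A j)) 0 with hr0 | hrpos
  · have h1 : δ = 0 := le_antisymm (hδle.trans hr0) hδ0
    rw [h1, mul_zero]
    exact hLpos
  set r := μ (A j) with hrdef
  have key : ∃ (p : ℕ) (C : EuclideanSpace ℝ (Fin 2)), dist (A j) C = r ∧
      segment ℝ (A j) C ⊆ Γ ∧
      ((A p = A j ∧ A (p + 1) = C) ∨ (A p = C ∧ A (p + 1) = A j)) := by
    rcases le_total (dist (A j) (A (j + n - 1))) (dist (A j) (A (j + 1))) with hc | hc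
    · have h1 : A (j % n) = A j := A_congr A hper (Nat.mod_mod_of_dvd j dvd_rfl)
      have h2 : A (j % n + 1) = A (j + 1) := A_congr A hper (Nat.mod_add_mod j n 1)
      refine ⟨j % n, A (j + 1), ?_, ?_, Or.inl ⟨h1, h2⟩⟩
      · rw [hval]; exact (max_eq_right hc).symm
      · intro z hz
        rw [hΓ]
        refine Set.mem_iUnion.2 ⟨⟨j % n, Nat.mod_lt _ hnpos⟩, ?_⟩
        show z ∈ segment ℝ (A (j % n)) (A (j % n + 1))
        rw [h1, h2]
        exact hz
    · have h1 : A ((j + n - 1) % n) = A (j + n - 1) :=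
        A_congr A hper (Nat.mod_mod_of_dvd _ dvd_rfl)
      have h2 : A ((j + n - 1) % n + 1) = A j := by
        have e1 : A ((j + n - 1) % n + 1) = A (j + n - 1 + 1) :=
          A_congr A hper (Nat.mod_add_mod _ n 1)
        have e2 : j + n - 1 + 1 = j + n := by omega
        rw [e1, e2, hper]
      refine ⟨(j + n - 1) % n, A (j + n - 1), ?_, ?_, Or.inr ⟨h1, h2⟩⟩
      · rw [hval]; exact (max_eq_left hc).symm
      · intro z hz
        rw [hΓ]
        refine Set.mem_iUnion.2 ⟨⟨(j + n - 1) % n, Nat.mod_lt _ hnpos⟩, ?_⟩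
        show z ∈ segment ℝ (A ((j + n - 1) % n)) (A ((j + n - 1) % n + 1))
        rw [h1, h2, segment_symm]
        exact hz
  obtain ⟨p, C, hC1, hC2, hC3⟩ := key
  obtain ⟨y, hyΓ, hyr, hyinner⟩ :=
    exists_far_point Γ hcomp hΓne μ hμ (A j) C (hAmem j) hC2 hloc r hrdef hC1 hrpos
  have hnormCa : ‖C - A j‖ = r := by rw [← hC1, dist_eq_norm, norm_sub_rev]
  have hnormya : ‖y - A j‖ = r := by rw [← hyr, dist_eq_norm, norm_sub_rev]
  have hyC2 : 2 * r ^ 2 ≤ dist y C ^ 2 := by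
    rw [dist_eq_norm]
    have ha : y - C = (y - A j) - (C - A j) := by abel
    rw [ha, norm_sub_sq_real, hnormya, hnormCa]
    have hb : (inner ℝ (y - A j) (C - A j) : ℝ) ≤ 0 := by
      rw [real_inner_comm]; exact hyinner
    linarith
  have hyC : Real.sqrt 2 * r ≤ dist y C := by
    have hs2 : Real.sqrt 2 ^ 2 = 2 := Real.sq_sqrt (by norm_num)
    have hs0 : 0 ≤ Real.sqrt 2 := Real.sqrt_nonneg 2
    nlinarith [dist_nonneg (x := y) (y := C), hyC2]
  have htri := tri_bound hn A hper Γ hΓ L hL p hyΓ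
  have hdyA : dist y (A j) = r := by rw [dist_comm]; exact hyr
  have hfinal : (2 + Real.sqrt 2) * r ≤ L := by
    rcases hC3 with ⟨h1, h2⟩ | ⟨h1, h2⟩
    · rw [h1, h2] at htri
      have hCy : dist C y = dist y C := dist_comm _ _
      calc (2 + Real.sqrt 2) * r = r + Real.sqrt 2 * r + r := by ring
        _ ≤ dist (A j) C + dist C y + dist y (A j) := by
            rw [hCy, hC1, hdyA]; linarith
        _ ≤ L := htri
    · rw [h1, h2] at htri
      have hCA : dist C (A j) = r := by rw [dist_comm]; exact hC1
      calc (2 + Real.sqrt 2) * r = r + r + Real.sqrt 2 * r := by ring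
        _ ≤ dist C (A j) + dist (A j) y + dist y C := by
            rw [hCA, hyr]; linarith
        _ ≤ L := htri
  have hpos : (0:ℝ) ≤ 2 + Real.sqrt 2 := by positivity
  calc (2 + Real.sqrt 2) * δ ≤ (2 + Real.sqrt 2) * r :=
        mul_le_mul_of_nonneg_left hδle hpos
    _ ≤ L := hfinal
end

section
/- Among all quadrilaterals ABCD in ℝ² with given diagonal lengths d(A,C), d(B,D) and given angle θ between the diagonals, the parallelogram has the smallest perimeter. -/
theorem parallelogram_min_perimeter_given_diagonals
    (A B C D A' B' C' D' : EuclideanSpace ℝ (Fin 2))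
    (hpar : B' - A' = C' - D')
    (hd1 : dist A' C' = dist A C) (hd2 : dist B' D' = dist B D)
    (hangle : InnerProductGeometry.angle (C' - A') (D' - B')
      = InnerProductGeometry.angle (C - A) (D - B)) :
    dist A' B' + dist B' C' + dist C' D' + dist D' A'
      ≤ dist A B + dist B C + dist C D + dist D A := by
  have hnu : ‖C' - A'‖ = ‖C - A‖ := by
    rw [dist_eq_norm, dist_eq_norm] at hd1
    rwa [norm_sub_rev, norm_sub_rev A C] at hd1
  have hnv : ‖D' - B'‖ = ‖D - B‖ := by
    rw [dist_eq_norm, dist_eq_norm] at hd2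
    rwa [norm_sub_rev, norm_sub_rev B D] at hd2
  have hinner : (inner ℝ (C' - A') (D' - B') : ℝ) = inner ℝ (C - A) (D - B) := by
    rw [← InnerProductGeometry.cos_angle_mul_norm_mul_norm,
        ← InnerProductGeometry.cos_angle_mul_norm_mul_norm (C - A) (D - B),
        hangle, hnu, hnv]
  have hadd : ‖(C' - A') + (D' - B')‖ = ‖(C - A) + (D - B)‖ := by
    have h : ‖(C' - A') + (D' - B')‖ ^ 2 = ‖(C - A) + (D - B)‖ ^ 2 := by
      rw [norm_add_sq_real, norm_add_sq_real, hnu, hnv, hinner]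
    rw [← Real.sqrt_sq (norm_nonneg ((C' - A') + (D' - B'))),
        ← Real.sqrt_sq (norm_nonneg ((C - A) + (D - B))), h]
  have hsub : ‖(C' - A') - (D' - B')‖ = ‖(C - A) - (D - B)‖ := by
    have h : ‖(C' - A') - (D' - B')‖ ^ 2 = ‖(C - A) - (D - B)‖ ^ 2 := by
      rw [norm_sub_sq_real (C' - A') (D' - B'), norm_sub_sq_real (C - A) (D - B), hnu, hnv, hinner]
    rw [← Real.sqrt_sq (norm_nonneg ((C' - A') - (D' - B'))),
        ← Real.sqrt_sq (norm_nonneg ((C - A) - (D - B))), h]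
  have hD'A' : D' - A' = C' - B' := by
    rw [sub_eq_sub_iff_add_eq_add] at hpar ⊢
    rw [add_comm D' B', hpar]
  have e1 : (C' - A') - (D' - B') = (B' - A') + (B' - A') := by
    have h : (C' - A') - (D' - B') = (C' - D') + (B' - A') := by abel
    rw [h, ← hpar]
  have e2 : (C' - A') + (D' - B') = (C' - B') + (C' - B') := by
    have h : (C' - A') + (D' - B') = (C' - B') + (D' - A') := by abel
    rw [h, hD'A']
  have l1 : dist A' B' + dist C' D' = ‖(C - A) - (D - B)‖ := by
    rw [← hsub, e1, dist_eq_norm, dist_eq_norm, ← hpar, norm_sub_rev]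
    rw [show (B' - A') + (B' - A') = (2:ℝ) • (B' - A') from (two_smul ℝ _).symm, norm_smul]
    simp [two_mul]
  have l2 : dist B' C' + dist D' A' = ‖(C - A) + (D - B)‖ := by
    rw [← hadd, e2, dist_eq_norm, dist_eq_norm, hD'A', norm_sub_rev B' C']
    rw [show (C' - B') + (C' - B') = (2:ℝ) • (C' - B') from (two_smul ℝ _).symm, norm_smul]
    simp [two_mul]
  have r1 : ‖(C - A) - (D - B)‖ ≤ dist A B + dist C D := by
    have h : (C - A) - (D - B) = (B - A) + (C - D) := by abel
    rw [h, dist_eq_norm, dist_eq_norm, norm_sub_rev A B]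
    exact norm_add_le _ _
  have r2 : ‖(C - A) + (D - B)‖ ≤ dist B C + dist D A := by
    have h : (C - A) + (D - B) = (C - B) + (D - A) := by abel
    rw [h, dist_eq_norm, dist_eq_norm, norm_sub_rev B C]
    exact norm_add_le _ _
  linarith
end

section
/- For any convex quadrilateral ABCD in ℝ² whose diagonals both have length 1 and meet at angle θ, the perimeter satisfies L(∂(ABCD)) ≥ 2√2 · sin(θ/2 + π/4). -/
open Real

theorem perimeter_bound_unit_diagonals
    (A B C D : EuclideanSpace ℝ (Fin 2)) (θ : ℝ)
    (hconv : (segment ℝ A C ∩ segment ℝ B D).Nonempty)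
    (hAC : dist A C = 1) (hBD : dist B D = 1)
    (hθ : InnerProductGeometry.angle (C - A) (D - B) = θ)
    (hθ0 : 0 ≤ θ) (hθ2 : θ ≤ π / 2) :
    2 * Real.sqrt 2 * Real.sin (θ / 2 + π / 4)
      ≤ dist A B + dist B C + dist C D + dist D A := by
  set u := C - A with hudef
  set v := D - B with hvdef
  have hu : ‖u‖ = 1 := by rw [hudef, ← dist_eq_norm, dist_comm]; exact hAC
  have hv : ‖v‖ = 1 := by rw [hvdef, ← dist_eq_norm, dist_comm]; exact hBD
  have hinner : (inner ℝ u v : ℝ) = Real.cos θ := by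
    have h := InnerProductGeometry.cos_angle u v
    rw [hθ, hu, hv] at h
    simpa using h.symm
  have hcos2 : Real.cos (θ / 2) ^ 2 = 1 / 2 + Real.cos θ / 2 := by
    have := Real.cos_sq (θ / 2)
    rwa [show 2 * (θ / 2) = θ by ring] at this
  have hpi : 0 < π := Real.pi_pos
  have hcosnn : 0 ≤ Real.cos (θ / 2) := by
    apply Real.cos_nonneg_of_mem_Icc
    constructor <;> [linarith; linarith]
  have hsinnn : 0 ≤ Real.sin (θ / 2) := by
    apply Real.sin_nonneg_of_nonneg_of_le_pi <;> linarith
  have hsin2 : Real.sin (θ / 2) ^ 2 = 1 / 2 - Real.cos θ / 2 := by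
    have := Real.sin_sq_add_cos_sq (θ / 2)
    linarith
  have hsum : ‖u + v‖ = 2 * Real.cos (θ / 2) := by
    have h2 : ‖u + v‖ ^ 2 = (2 * Real.cos (θ / 2)) ^ 2 := by
      rw [norm_add_sq_real, hu, hv, hinner]
      nlinarith
    calc ‖u + v‖ = Real.sqrt (‖u + v‖ ^ 2) := (Real.sqrt_sq (norm_nonneg _)).symm
      _ = Real.sqrt ((2 * Real.cos (θ / 2)) ^ 2) := by rw [h2]
      _ = 2 * Real.cos (θ / 2) := Real.sqrt_sq (by linarith)
  have hdiff : ‖u - v‖ = 2 * Real.sin (θ / 2) := by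
    have h2 : ‖u - v‖ ^ 2 = (2 * Real.sin (θ / 2)) ^ 2 := by
      rw [norm_sub_sq_real, hu, hv, hinner]
      nlinarith
    calc ‖u - v‖ = Real.sqrt (‖u - v‖ ^ 2) := (Real.sqrt_sq (norm_nonneg _)).symm
      _ = Real.sqrt ((2 * Real.sin (θ / 2)) ^ 2) := by rw [h2]
      _ = 2 * Real.sin (θ / 2) := Real.sqrt_sq (by linarith)
  have h1 : ‖u - v‖ ≤ dist A B + dist C D := by
    have h := norm_sub_le (B - A) (D - C)
    have e : (B - A) - (D - C) = u - v := by rw [hudef, hvdef]; abel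
    rw [e] at h
    rw [dist_eq_norm, dist_eq_norm, ← norm_neg (A - B), ← norm_neg (C - D)]
    simpa using h
  have h2 : ‖u + v‖ ≤ dist B C + dist D A := by
    have h := norm_sub_le (C - B) (A - D)
    have e : (C - B) - (A - D) = u + v := by rw [hudef, hvdef]; abel
    rw [e] at h
    rw [dist_eq_norm, dist_eq_norm, ← norm_neg (B - C), ← norm_neg (D - A)]
    simpa using h
  have hrhs : 2 * Real.sqrt 2 * Real.sin (θ / 2 + π / 4)
      = 2 * Real.sin (θ / 2) + 2 * Real.cos (θ / 2) := by
    rw [Real.sin_add, Real.sin_pi_div_four, Real.cos_pi_div_four]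
    ring_nf
    rw [Real.sq_sqrt (by norm_num : (0:ℝ) ≤ 2)]
    ring
  rw [hrhs]
  rw [← hsum, ← hdiff]
  linarith
end

section
/- The function g(α) = (2 + cos α − cos²α)/sin α + √(2cos α − cos²α) + √(2 + 2cos²α − 2cos α − 2 sin α·√(2cos α − cos²α)) attains its minimal value on the interval [π/3, π/2] exactly at α = π/2, and this minimal value is 2 + √2. -/
open Real

lemma tsA (c r : ℝ) (hc0 : 0 ≤ c) (hc : c ≤ 3/10) (hr0 : 0 ≤ r)
    (hr2 : r^2 = (2*c - c^2) * (1 - c^2)) : 227/100 * c ≤ r := by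
  have h1 : 0 ≤ (3/10 - c) * (66629/10000 + 17/10*c - c^2) :=
    mul_nonneg (by linarith) (by nlinarith)
  have hsq : (227/100 * c)^2 ≤ r^2 := by nlinarith
  calc 227/100 * c = Real.sqrt ((227/100 * c)^2) := (Real.sqrt_sq (by positivity)).symm
    _ ≤ Real.sqrt (r^2) := Real.sqrt_le_sqrt hsq
    _ = r := Real.sqrt_sq hr0

lemma tsB (c r : ℝ) (hc0 : 3/10 ≤ c) (hc : c ≤ 1/2) (hr0 : 0 ≤ r)
    (hr2 : r^2 = (2*c - c^2) * (1 - c^2)) : 578/1000 + 343/1000 * c ≤ r := by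
  have h1 : 0 ≤ (c - 3/10) * (1/2 - c) * (-c^2 + 12/10*c + 2227649/1000000) :=
    mul_nonneg (mul_nonneg (by linarith) (by linarith)) (by nlinarith)
  have hsq : (578/1000 + 343/1000 * c)^2 ≤ r^2 := by nlinarith
  calc 578/1000 + 343/1000 * c = Real.sqrt ((578/1000 + 343/1000 * c)^2) :=
      (Real.sqrt_sq (by positivity)).symm
    _ ≤ Real.sqrt (r^2) := Real.sqrt_le_sqrt hsq
    _ = r := Real.sqrt_sq hr0

lemma sUB (c s : ℝ) (hc : c ≤ 1/2) (hs2 : s^2 = 1 - c^2) (hs0 : 0 < s) :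
    s ≤ 10926/10000 - 44/100 * c := by
  have hL : (0:ℝ) ≤ 10926/10000 - 44/100 * c := by linarith
  have hsq : s^2 ≤ (10926/10000 - 44/100 * c)^2 := by nlinarith [sq_nonneg (c - 4028/10000)]
  calc s = Real.sqrt (s^2) := (Real.sqrt_sq hs0.le).symm
    _ ≤ Real.sqrt ((10926/10000 - 44/100 * c)^2) := Real.sqrt_le_sqrt hsq
    _ = _ := Real.sqrt_sq hL

lemma keyA (q c s r : ℝ) (hq : 14142/10000 ≤ q) (hq' : q ≤ 14143/10000)
    (hc0 : 0 ≤ c) (hc : c ≤ 3/10) (hs2 : s^2 = 1 - c^2) (hs0 : 0 < s) (hs1 : s ≤ 1)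
    (hr : 227/100 * c ≤ r) :
    c/5 ≤ 2*q + q*c - (q+1)*c^2 + (q-1)*r + 1 + s*(1-2*c) - (2*q+2)*s := by
  have h1 : c^2 ≤ 2*(1-s) := by nlinarith
  have h2 : 0 ≤ (q-1) * (r - 227/100*c) := mul_nonneg (by linarith) (by linarith)
  have h3 : 0 ≤ (q - 14142/10000) * (2 + c - c^2 + r - 2*s) := by
    have : 0 ≤ r := le_trans (by positivity) hr
    nlinarith
  nlinarith [mul_nonneg hc0 (by nlinarith : (0:ℝ) ≤ 1 - s),
    mul_nonneg hc0 (by linarith : (0:ℝ) ≤ 3/10 - c)]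

lemma keyB (q c s r : ℝ) (hq : 14142/10000 ≤ q) (hq' : q ≤ 14143/10000)
    (hc0 : 3/10 ≤ c) (hc : c ≤ 1/2) (hs2 : s^2 = 1 - c^2) (hs0 : 0 < s) (hs1 : s ≤ 1)
    (hsL : s ≤ 10926/10000 - 44/100 * c)
    (hr : 578/1000 + 343/1000 * c ≤ r) :
    1/100 ≤ 2*q + q*c - (q+1)*c^2 + (q-1)*r + 1 + s*(1-2*c) - (2*q+2)*s := by
  have h2 : 0 ≤ (q-1) * (r - (578/1000 + 343/1000*c)) := mul_nonneg (by linarith) (by linarith)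
  have h3 : 0 ≤ (q - 14142/10000) * (2 + c - c^2 + r - 2*s) := by
    have : 0 ≤ r := le_trans (by positivity) hr
    nlinarith
  nlinarith [mul_nonneg (by linarith : (0:ℝ) ≤ c - 3/10) (by linarith : (0:ℝ) ≤ 1/2 - c)]

lemma core (α : ℝ) (h1 : π/3 ≤ α) (h2 : α ≤ π/2) :
    2 + Real.sqrt 2 ≤
      (2 + Real.cos α - (Real.cos α) ^ 2) / Real.sin α
      + Real.sqrt (2 * Real.cos α - (Real.cos α) ^ 2)
      + Real.sqrt (2 + 2 * (Real.cos α) ^ 2 - 2 * Real.cos α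
          - 2 * Real.sin α * Real.sqrt (2 * Real.cos α - (Real.cos α) ^ 2)) ∧
    (α < π/2 →
      2 + Real.sqrt 2 <
      (2 + Real.cos α - (Real.cos α) ^ 2) / Real.sin α
      + Real.sqrt (2 * Real.cos α - (Real.cos α) ^ 2)
      + Real.sqrt (2 + 2 * (Real.cos α) ^ 2 - 2 * Real.cos α
          - 2 * Real.sin α * Real.sqrt (2 * Real.cos α - (Real.cos α) ^ 2))) := by
  have hπ := Real.pi_pos
  set c := Real.cos α with hcdef
  set s := Real.sin α with hsdef
  set q := Real.sqrt 2 with hqdef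
  have hq2 : q^2 = 2 := Real.sq_sqrt (by norm_num)
  have hq0 : 0 < q := Real.sqrt_pos.mpr (by norm_num)
  have hqlb : 14142/10000 ≤ q := by
    have := Real.sqrt_le_sqrt (show (14142/10000:ℝ)^2 ≤ 2 by norm_num)
    rwa [Real.sqrt_sq (by norm_num)] at this
  have hqub : q ≤ 14143/10000 := by
    have := Real.sqrt_le_sqrt (show (2:ℝ) ≤ (14143/10000)^2 by norm_num)
    rwa [Real.sqrt_sq (by norm_num)] at this
  have hα0 : 0 < α := by linarith
  have hαπ : α < π := by linarith
  have hs0 : 0 < s := Real.sin_pos_of_pos_of_lt_pi hα0 hαπ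
  have hs1 : s ≤ 1 := Real.sin_le_one α
  have hc0 : 0 ≤ c := Real.cos_nonneg_of_mem_Icc ⟨by linarith, h2⟩
  have hchalf : c ≤ 1/2 := by
    have := Real.cos_le_cos_of_nonneg_of_le_pi (by positivity : (0:ℝ) ≤ π/3)
      (by linarith : α ≤ π) h1
    rwa [Real.cos_pi_div_three] at this
  have hs2 : s^2 = 1 - c^2 := by nlinarith [Real.sin_sq_add_cos_sq α]
  have hrad : (0:ℝ) ≤ 2*c - c^2 := by nlinarith
  set t := Real.sqrt (2*c - c^2) with htdef
  have ht0 : 0 ≤ t := Real.sqrt_nonneg _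
  have ht2 : t^2 = 2*c - c^2 := Real.sq_sqrt hrad
  have hr2 : (t*s)^2 = (2*c - c^2) * (1 - c^2) := by rw [mul_pow, ht2, hs2]
  have hr0 : 0 ≤ t*s := mul_nonneg ht0 hs0.le
  -- abbreviation for E
  set E := 2*q + q*c - (q+1)*c^2 + (q-1)*(t*s) + 1 + s*(1-2*c) - (2*q+2)*s with hEdef
  have hE0 : 0 ≤ E ∧ (0 < c → 0 < E) := by
    rcases le_or_gt c (3/10) with hcase | hcase
    · have := keyA q c s (t*s) hqlb hqub hc0 hcase hs2 hs0 hs1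
        (tsA c (t*s) hc0 hcase hr0 hr2)
      exact ⟨by linarith, fun hcpos => by linarith⟩
    · have := keyB q c s (t*s) hqlb hqub hcase.le hchalf hs2 hs0 hs1
        (sUB c s hchalf hs2 hs0)
        (tsB c (t*s) hcase.le hchalf hr0 hr2)
      exact ⟨by linarith, fun _ => by linarith⟩
  -- the square root lower bound
  have hRad : 2 + 2*c^2 - 2*c - 2*s*t = (s-t)^2 + (1-2*c)^2 := by
    linear_combination - hs2 - ht2
  have hw : (s - t + 1 - 2*c)/q ≤ Real.sqrt (2 + 2*c^2 - 2*c - 2*s*t) := by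
    rcases le_or_gt (s - t + 1 - 2*c) 0 with h | h
    · have : (s - t + 1 - 2*c)/q ≤ 0 := div_nonpos_of_nonpos_of_nonneg h hq0.le
      linarith [Real.sqrt_nonneg (2 + 2*c^2 - 2*c - 2*s*t)]
    · rw [show ((2:ℝ) + 2*c^2 - 2*c - 2*s*t) = (s-t)^2 + (1-2*c)^2 from hRad]
      rw [Real.le_sqrt (by positivity)]
      rw [div_pow, hq2, div_le_iff₀ (by norm_num : (0:ℝ) < 2)]
      · nlinarith [sq_nonneg ((s-t) - (1-2*c))]
      · positivity
  -- the exact identity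
  have hsq0 : s * q ≠ 0 := by positivity
  have hid : (2 + c - c^2)/s + t + (s - t + 1 - 2*c)/q = 2 + q + E/(s*q) := by
    rw [hEdef]
    field_simp
    linear_combination hs2 - s * hq2
  have hterm : 2 + q + E/(s*q) ≤
      (2 + c - c^2)/s + t + Real.sqrt (2 + 2*c^2 - 2*c - 2*s*t) := by
    rw [← hid]
    linarith [hw]
  have hmatch : Real.sqrt (2 + 2 * c ^ 2 - 2 * c - 2 * s * Real.sqrt (2 * c - c ^ 2))
      = Real.sqrt (2 + 2*c^2 - 2*c - 2*s*t) := by rw [← htdef]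
  constructor
  · have : 0 ≤ E/(s*q) := div_nonneg hE0.1 (by positivity)
    calc 2 + q ≤ 2 + q + E/(s*q) := by linarith
      _ ≤ _ := by rw [hmatch] at hterm ⊢; linarith [hterm]
  · intro hlt
    have hcpos : 0 < c := Real.cos_pos_of_mem_Ioo ⟨by linarith, hlt⟩
    have : 0 < E/(s*q) := div_pos (hE0.2 hcpos) (by positivity)
    calc 2 + q < 2 + q + E/(s*q) := by linarith
      _ ≤ _ := by rw [hmatch] at hterm ⊢; linarith [hterm]

theorem case31a_perimeter_function_min
    (g : ℝ → ℝ)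
    (hg : ∀ α, g α =
      (2 + Real.cos α - (Real.cos α) ^ 2) / Real.sin α
      + Real.sqrt (2 * Real.cos α - (Real.cos α) ^ 2)
      + Real.sqrt (2 + 2 * (Real.cos α) ^ 2 - 2 * Real.cos α
          - 2 * Real.sin α * Real.sqrt (2 * Real.cos α - (Real.cos α) ^ 2))) :
    (∀ α ∈ Set.Icc (π / 3) (π / 2), 2 + Real.sqrt 2 ≤ g α) ∧
    (∀ α ∈ Set.Icc (π / 3) (π / 2), g α = 2 + Real.sqrt 2 ↔ α = π / 2) := by
  constructor
  · intro α hα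
    rw [hg]
    exact (core α hα.1 hα.2).1
  · intro α hα
    constructor
    · intro heq
      by_contra hne
      have hlt : α < π/2 := lt_of_le_of_ne hα.2 hne
      have := (core α hα.1 hα.2).2 hlt
      rw [← hg] at this
      linarith
    · intro heq
      subst heq
      rw [hg]
      rw [Real.cos_pi_div_two, Real.sin_pi_div_two]
      norm_num
end

section
/- The function f(α) = 2/sin α + 2·cot α − 2·cot(3α/2) attains its minimal value on the interval (π/3, π/2) exactly at α₀ = 2·arccos((1/2)·√(1+√3)), and this minimal value equals (4/3)·√(3 + 2√3). -/
open Real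
set_option maxHeartbeats 1600000

private lemma sq_le_of_nonneg' {a b : ℝ} (hb : 0 ≤ b) (h : a^2 ≤ b^2) : a ≤ b := by
  nlinarith

private lemma sq_inj_of_nonneg' {a b : ℝ} (ha : 0 ≤ a) (hb : 0 ≤ b) (h : a^2 = b^2) : a = b := by
  nlinarith

private lemma poly_id' (u w : ℝ) (hw : w^2 = 3) :
    9*u - (3+2*w)*(1-u)*(4*u-1)^2
      = 16*(3+2*w)*(u-(1+w)/4)^2*(u-(2-w)/2) := by
  linear_combination (-w^2 - (3/2)*w + 6*u*w - 3*u) * hw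

private lemma f_rw' (α : ℝ) (hs : 0 < Real.sin (α/2)) (hc : 0 < Real.cos (α/2))
    (h4 : 1 < 4 * (Real.cos (α/2))^2) :
    2 / Real.sin α + 2 * Real.cos α / Real.sin α
      - 2 * Real.cos (3 * α / 2) / Real.sin (3 * α / 2)
    = 4 * Real.cos (α/2) / (Real.sin (α/2) * (4 * (Real.cos (α/2))^2 - 1)) := by
  set s := Real.sin (α/2) with hsdef
  set c := Real.cos (α/2) with hcdef
  have hpy : s^2 + c^2 = 1 := Real.sin_sq_add_cos_sq (α/2)
  have hsinα : Real.sin α = 2 * s * c := by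
    have := Real.sin_two_mul (α/2); rwa [show 2*(α/2) = α by ring] at this
  have hcosα : Real.cos α = 2 * c^2 - 1 := by
    have := Real.cos_two_mul (α/2); rwa [show 2*(α/2) = α by ring] at this
  have hsin3 : Real.sin (3*α/2) = 3 * s - 4 * s^3 := by
    have := Real.sin_three_mul (α/2); rwa [show 3*(α/2) = 3*α/2 by ring] at this
  have hcos3 : Real.cos (3*α/2) = 4 * c^3 - 3 * c := by
    have := Real.cos_three_mul (α/2); rwa [show 3*(α/2) = 3*α/2 by ring] at this
  have hs0 : s ≠ 0 := ne_of_gt hs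
  have hc0 : c ≠ 0 := ne_of_gt hc
  have h41 : 4*c^2 - 1 ≠ 0 := by nlinarith
  have hsin3' : 3 * s - 4 * s^3 = s * (4*c^2 - 1) := by nlinarith
  have hsin30 : 3 * s - 4 * s^3 ≠ 0 := by rw [hsin3']; exact mul_ne_zero hs0 h41
  rw [hsinα, hcosα, hsin3, hcos3, hsin3']
  have hA : 2 * s * c ≠ 0 := mul_ne_zero (mul_ne_zero two_ne_zero hs0) hc0
  have hB : s * (4 * c ^ 2 - 1) ≠ 0 := mul_ne_zero hs0 h41
  rw [← add_div, div_sub_div _ _ hA hB, div_eq_div_iff (mul_ne_zero hA hB) hB]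
  ring

private lemma key_ineq (s c : ℝ) (hs : 0 < s) (hc : 0 < c) (hc2 : 1/2 < c^2)
    (hpy : s^2 + c^2 = 1) :
    4/3 * Real.sqrt (3 + 2*Real.sqrt 3) ≤ 4*c/(s*(4*c^2-1))
    ∧ (4*c/(s*(4*c^2-1)) = 4/3 * Real.sqrt (3 + 2*Real.sqrt 3) → c^2 = (1+Real.sqrt 3)/4) := by
  set w := Real.sqrt 3 with hwdef
  have hw : w^2 = 3 := Real.sq_sqrt (by norm_num)
  have hw0 : 0 ≤ w := Real.sqrt_nonneg 3
  have hw1 : 1 < w := by nlinarith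
  set M := 4/3 * Real.sqrt (3 + 2*w) with hMdef
  have hM0 : 0 ≤ M := by positivity
  have hM2 : M^2 = 16/9 * (3 + 2*w) := by
    rw [hMdef, mul_pow, Real.sq_sqrt (by positivity)]; ring
  have hd : 0 < s*(4*c^2-1) := by nlinarith
  set d := s*(4*c^2-1) with hddef
  have hs2 : s^2 = 1 - c^2 := by linarith
  have e1 : (M*d)^2 = 16/9*(3+2*w)*(1-c^2)*(4*c^2-1)^2 := by
    rw [hddef]
    linear_combination (s^2*(4*c^2-1)^2) * hM2 + (16/9*(3+2*w)*(4*c^2-1)^2) * hs2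
  have e2 : (4*c)^2 - (M*d)^2
      = (256/9*(3+2*w)) * ((c^2-(1+w)/4)^2 * (c^2-(2-w)/2)) := by
    rw [e1]; linear_combination (16/9) * poly_id' (c^2) w hw
  have h3w : (0:ℝ) < 3+2*w := by positivity
  have hr : 0 < c^2-(2-w)/2 := by nlinarith
  have hnn : 0 ≤ (256/9*(3+2*w)) * ((c^2-(1+w)/4)^2 * (c^2-(2-w)/2)) :=
    mul_nonneg (by positivity) (mul_nonneg (sq_nonneg _) hr.le)
  constructor
  · rw [le_div_iff₀ hd]
    apply sq_le_of_nonneg' (by positivity)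
    linarith [e2, hnn]
  · intro h
    rw [div_eq_iff hd.ne'] at h
    have h0 : (256/9*(3+2*w)) * ((c^2-(1+w)/4)^2 * (c^2-(2-w)/2)) = 0 := by
      rw [← e2, h]; ring
    have hK : (0:ℝ) < 256/9*(3+2*w) := by positivity
    rcases mul_eq_zero.mp h0 with h' | h'
    · exact absurd h' hK.ne'
    rcases mul_eq_zero.mp h' with h'' | h''
    · have := pow_eq_zero_iff (n := 2) (by norm_num) |>.mp h''
      linarith
    · exact absurd h'' hr.ne' 

theorem kite_perimeter_function_min
    (f : ℝ → ℝ)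
    (hf : ∀ α, f α = 2 / Real.sin α + 2 * Real.cos α / Real.sin α
      - 2 * Real.cos (3 * α / 2) / Real.sin (3 * α / 2))
    (α₀ : ℝ) (hα₀ : α₀ = 2 * Real.arccos (Real.sqrt (1 + Real.sqrt 3) / 2)) :
    α₀ ∈ Set.Ioo (π / 3) (π / 2) ∧
    f α₀ = (4 / 3) * Real.sqrt (3 + 2 * Real.sqrt 3) ∧
    (∀ α ∈ Set.Ioo (π / 3) (π / 2), f α₀ ≤ f α) ∧
    (∀ α ∈ Set.Ioo (π / 3) (π / 2), f α = f α₀ → α = α₀) := by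
  have hpi := Real.pi_pos
  set w := Real.sqrt 3 with hwdef
  have hw : w^2 = 3 := Real.sq_sqrt (by norm_num)
  have hw0 : 0 ≤ w := Real.sqrt_nonneg 3
  have hw1 : 1 < w := by nlinarith
  have hw2 : w < 2 := by nlinarith
  set x := Real.sqrt (1 + w) / 2 with hxdef
  have h1w : (0:ℝ) ≤ 1 + w := by linarith
  have hx2 : x^2 = (1+w)/4 := by
    rw [hxdef, div_pow, Real.sq_sqrt h1w]; norm_num
  have hx0 : 0 < x := by rw [hxdef]; positivity
  have hs2 : Real.sqrt 2 ^ 2 = 2 := Real.sq_sqrt (by norm_num)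
  have hs2n : (0:ℝ) ≤ Real.sqrt 2 := Real.sqrt_nonneg 2
  -- bounds on x : √2/2 < x < √3/2
  have hxl : Real.sqrt 2 / 2 < x := by
    rw [hxdef, div_lt_div_iff_of_pos_right (by norm_num)]
    have : Real.sqrt 2 < Real.sqrt (1+w) := Real.sqrt_lt_sqrt (by norm_num) (by linarith)
    exact this
  have hxu : x < w / 2 := by
    rw [hxdef, div_lt_div_iff_of_pos_right (by norm_num)]
    have : Real.sqrt (1+w) < Real.sqrt 3 := Real.sqrt_lt_sqrt h1w (by linarith)
    exact this
  have hx1 : x ≤ 1 := by nlinarith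
  set A := Real.arccos x with hAdef
  have hconA : Real.cos A = x := Real.cos_arccos (by linarith) hx1
  have hA0 : 0 ≤ A := Real.arccos_nonneg x
  have hAπ : A ≤ π := Real.arccos_le_pi x
  -- π/6 < A < π/4
  have hAu : A < π/4 := by
    by_contra h
    push_neg at h
    have := Real.cos_le_cos_of_nonneg_of_le_pi (by positivity) hAπ h
    rw [hconA, Real.cos_pi_div_four] at this
    linarith
  have hAl : π/6 < A := by
    by_contra h
    push_neg at h
    have := Real.cos_le_cos_of_nonneg_of_le_pi hA0 (by linarith) h
    rw [hconA, Real.cos_pi_div_six] at this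
    linarith
  have hmem : α₀ ∈ Set.Ioo (π/3) (π/2) := by
    rw [hα₀]; constructor <;> [linarith; linarith]
  have hhalf : α₀/2 = A := by rw [hα₀]; ring
  -- data at α₀
  have hsinA : Real.sin A = Real.sqrt ((3-w)/4) := by
    rw [hAdef, Real.sin_arccos, hx2]
    congr 1
    ring
  have hsinA0 : 0 < Real.sin A := Real.sin_pos_of_pos_of_lt_pi (by linarith) (by linarith)
  have hsinAsq : Real.sin A ^ 2 = (3-w)/4 := by
    rw [hsinA, Real.sq_sqrt (by nlinarith)]
  have hxx : 1 < 4 * x^2 := by rw [hx2]; nlinarith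
  have hfα₀ : f α₀ = 4*x/(Real.sin A * (4*x^2-1)) := by
    rw [hf α₀]
    have := f_rw' α₀ (by rw [hhalf]; exact hsinA0) (by rw [hhalf, hconA]; exact hx0)
      (by rw [hhalf, hconA]; exact hxx)
    rw [hhalf, hconA] at this
    exact this
  set M := 4/3 * Real.sqrt (3 + 2*w) with hMdef
  have hM0 : 0 ≤ M := by positivity
  have hM2 : M^2 = 16/9 * (3 + 2*w) := by
    rw [hMdef, mul_pow, Real.sq_sqrt (by positivity)]; ring
  have hd0 : 0 < Real.sin A * (4*x^2-1) := mul_pos hsinA0 (by linarith)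
  have hval : f α₀ = M := by
    rw [hfα₀]
    apply sq_inj_of_nonneg' (div_nonneg (by positivity) hd0.le) hM0
    have expand : (4*x/(Real.sin A*(4*x^2-1)))^2
        = 16*x^2/((Real.sin A)^2*(4*x^2-1)^2) := by
      rw [div_pow]; ring_nf
    rw [expand, hsinAsq, hM2]
    have hden : (3-w)/4*(4*x^2-1)^2 ≠ 0 := by
      have h1 : (0:ℝ) < 3 - w := by linarith
      have h2 : (0:ℝ) < 4*x^2-1 := by linarith
      positivity
    rw [div_eq_iff hden]
    linear_combination (-64*x^2 - 64/3*x^2*w + 128/9*x^2*w^2 + 32 - 32/3*w - 80/9*w^2 + 32/9*w^3) * hx2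
      + (8/9*w^2 - 4/3*w - 4/3) * hw
  -- per-point data for α in the interval
  have hdata : ∀ α ∈ Set.Ioo (π/3) (π/2),
      0 < Real.sin (α/2) ∧ 0 < Real.cos (α/2) ∧ 1/2 < Real.cos (α/2)^2 := by
    intro α hα
    obtain ⟨h1, h2⟩ := hα
    have ht1 : π/6 < α/2 := by linarith
    have ht2 : α/2 < π/4 := by linarith
    have hsin : 0 < Real.sin (α/2) := Real.sin_pos_of_pos_of_lt_pi (by linarith) (by linarith)
    have hcos : Real.sqrt 2/2 < Real.cos (α/2) := by
      have := Real.cos_lt_cos_of_nonneg_of_le_pi (by linarith) (by linarith) ht2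
      rwa [Real.cos_pi_div_four] at this
    refine ⟨hsin, by linarith [hs2n], ?_⟩
    nlinarith
  refine ⟨hmem, hval, ?_, ?_⟩
  · intro α hα
    obtain ⟨hsin, hcos, hcsq⟩ := hdata α hα
    rw [hval, hf α, f_rw' α hsin hcos (by linarith)]
    exact (key_ineq _ _ hsin hcos hcsq (Real.sin_sq_add_cos_sq _)).1
  · intro α hα heq
    obtain ⟨hsin, hcos, hcsq⟩ := hdata α hα
    rw [hf α, f_rw' α hsin hcos (by linarith), hval] at heq
    have hc2 := (key_ineq _ _ hsin hcos hcsq (Real.sin_sq_add_cos_sq _)).2 heq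
    have hcx : Real.cos (α/2) = x := by
      have h1 : Real.cos (α/2) = Real.sqrt (Real.cos (α/2)^2) := (Real.sqrt_sq hcos.le).symm
      rw [h1, hc2, ← hx2, Real.sqrt_sq hx0.le]
    have hAx : Real.cos (α/2) = Real.cos A := by rw [hcx, hconA]
    have : α/2 = A := by
      apply Real.injOn_cos ⟨by linarith [hα.1], by linarith [hα.2]⟩ ⟨hA0, hAπ⟩ hAx
    rw [hα₀]; linarith
end
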